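/- arXiv:0804.1813 — 3 statements merged into one kernel-verified Lean document; each statement's English description precedes it below -/
import Mathlib

section
/- Let K be a homology (d-1)-sphere over a fixed coefficient ring, and let A be a proper nonempty subcomplex of K that is itself a homology (d-1)-sphere. Then A = K. (Equivalently: a homology sphere cannot strictly contain another homology sphere of the same dimension as a subcomplex.) -/
open scoped BigOperators

variable {V : Type} [DecidableEq V]

/-- A (finite abstract) simplicial complex: a set of finite subsets of `V`
containing the empty face and closed under taking subsets. -/
def IsComplex (K : Set (Finset V)) : Prop :=
  ∅ ∈ K ∧ ∀ s ∈ K, ∀ t ⊆ s, t ∈ K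

/-- Downward closure of a set of faces. -/
def cl (K : Set (Finset V)) : Set (Finset V) := {t | ∃ s ∈ K, t ⊆ s}

/-- Ordered `n`-tuples of vertices spanning a face (of the downward closure) of `K`;
these index the degree-`n` (ordered) chains, corresponding to faces of cardinality `n`. -/
def vertSimp (K : Set (Finset V)) (n : ℕ) : Type :=
  {f : Fin n → V // Finset.univ.image f ∈ cl K}

/-- Ordered simplicial chains with rational coefficients. Degree `n` chains correspond
to faces of cardinality `n`; degree `0` is spanned by the empty face (augmentation). -/
abbrev Chains (K : Set (Finset V)) (n : ℕ) : Type := vertSimp K n →₀ ℚ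

/-- Deletion of the `i`-th vertex of an ordered simplex. -/
def faceMap {K : Set (Finset V)} {n : ℕ} (s : vertSimp K (n + 1)) (i : Fin (n + 1)) :
    vertSimp K n :=
  ⟨s.1 ∘ i.succAbove, by
    obtain ⟨t, ht, hsub⟩ := s.2
    refine ⟨t, ht, fun x hx => ?_⟩
    simp only [Finset.mem_image, Function.comp_apply] at hx
    obtain ⟨j, -, rfl⟩ := hx
    exact hsub (Finset.mem_image_of_mem _ (Finset.mem_univ _))⟩

/-- The simplicial boundary operator (including the augmentation in lowest degree). -/
noncomputable def bdry (K : Set (Finset V)) (n : ℕ) :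
    Chains K (n + 1) →ₗ[ℚ] Chains K n :=
  Finsupp.lsum ℚ fun s =>
    ∑ i : Fin (n + 1), ((-1 : ℚ) ^ (i : ℕ)) • Finsupp.lsingle (faceMap s i)

/-- Reduced simplicial homology `H̃_m` (for `m ≥ 0`): cycles of degree `m + 1`
modulo (intersection with) boundaries. -/
noncomputable abbrev redH (K : Set (Finset V)) (m : ℕ) :=
  LinearMap.ker (bdry K m) ⧸
    Submodule.comap (LinearMap.ker (bdry K m)).subtype (LinearMap.range (bdry K (m + 1)))

/-- Reduced homology `H̃_{-1}`. -/
noncomputable abbrev redHneg (K : Set (Finset V)) :=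
  Chains K 0 ⧸ LinearMap.range (bdry K 0)

/-- `K` has the reduced homology of the sphere `S^m` (`m = -1` allowed). -/
def SphereHomology (K : Set (Finset V)) (m : ℤ) : Prop :=
  (∀ n : ℕ, Module.rank ℚ (redH K n) = if (n : ℤ) = m then 1 else 0) ∧
  Module.rank ℚ (redHneg K) = if m = -1 then 1 else 0

/-- The link of a face. -/
def link (K : Set (Finset V)) (F : Finset V) : Set (Finset V) :=
  {T | T ∩ F = ∅ ∧ T ∪ F ∈ K}

/-- A homology `m`-sphere: a simplicial complex all of whose face links (including the
link of the empty face, i.e. the complex itself) have the reduced homology of a sphere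
of the complementary dimension. -/
def IsHomologySphere (K : Set (Finset V)) (m : ℤ) : Prop :=
  IsComplex K ∧ ∀ F ∈ K, SphereHomology (link K F) (m - F.card)

/-- The vertex set of a complex. -/
def verts (K : Set (Finset V)) : Set V := {v | {v} ∈ K}

/-- The join of two complexes (on disjoint vertex sets). -/
def joinC (K L : Set (Finset V)) : Set (Finset V) :=
  {F | ∃ A ∈ K, ∃ B ∈ L, F = A ∪ B}

/-- `F` is a missing face of `K`: a non-face, all of whose vertices are vertices of `K`
and all of whose proper subsets are faces of `K`. -/
def IsMissingFace (K : Set (Finset V)) (F : Finset V) : Prop :=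
  (∀ v ∈ F, {v} ∈ K) ∧ F ∉ K ∧ ∀ t ⊂ F, t ∈ K

/-- The number of `i`-dimensional faces (faces of cardinality `i + 1`). -/
noncomputable def fcount (K : Set (Finset V)) (i : ℕ) : ℕ :=
  {F ∈ K | F.card = i + 1}.ncard

/-- `g₂(K) = f₁ - d f₀ + (d+1 choose 2)` for a `(d-1)`-dimensional complex. -/
noncomputable def g2 (d : ℕ) (K : Set (Finset V)) : ℤ :=
  (fcount K 1 : ℤ) - (d : ℤ) * (fcount K 0 : ℤ) + ((d + 1).choose 2 : ℤ)

/-- The boundary complex of the simplex on vertex set `S`: all proper subsets of `S`. -/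
def simplexBdry (S : Finset V) : Set (Finset V) := {F | F ⊂ S}

/-- The cycle (1-dimensional complex) on vertices `c 0, c 1, …, c (n-1)` in cyclic order. -/
def cycleComplex {n : ℕ} (c : ZMod n → V) : Set (Finset V) :=
  {F | F = ∅ ∨ (∃ i, F = {c i}) ∨ ∃ i, F = {c i, c (i + 1)}}

/-- A flag (clique) complex: every set of vertices that is pairwise joined by edges is a face. -/
def FlagComplex (K : Set (Finset V)) : Prop :=
  ∀ F : Finset V, (∀ v ∈ F, {v} ∈ K) →
    (∀ x ∈ F, ∀ y ∈ F, x ≠ y → ({x, y} : Finset V) ∈ K) → F ∈ K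

/-- A `(d-1)`-dimensional complex is prime if it has no missing face of cardinality `d`
and it is not the boundary complex of a simplex. -/
def IsPrime (d : ℕ) (K : Set (Finset V)) : Prop :=
  (¬ ∃ F : Finset V, IsMissingFace K F ∧ F.card = d) ∧
  ¬ ∃ S : Finset V, K = simplexBdry S

/-- Edge contraction of `{u,v}` (contracting `u` into `v`). -/
def contract (K : Set (Finset V)) (u v : V) : Set (Finset V) :=
  {T ∈ K | u ∉ T} ∪ {T | ∃ S ∈ link K {u}, v ∉ S ∧ T = insert v S}

/-- A facet: a maximal face. -/
def IsFacet (K : Set (Finset V)) (F : Finset V) : Prop :=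
  F ∈ K ∧ ∀ G ∈ K, F ⊆ G → G = F

/-- Stellar subdivision at the face `F` using the new vertex `w`. -/
def stellarSub (K : Set (Finset V)) (F : Finset V) (w : V) : Set (Finset V) :=
  {T ∈ K | ¬ F ⊆ T} ∪
  {T | ∃ A B : Finset V, A ⊂ F ∧ B ∈ link K F ∧ T = insert w (A ∪ B)}

/-- An acyclic complex: all reduced homology vanishes. -/
def Acyclic (K : Set (Finset V)) : Prop :=
  (∀ m : ℕ, Module.rank ℚ (redH K m) = 0) ∧ Module.rank ℚ (redHneg K) = 0

/-- A homology `m`-ball with boundary `B`. -/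
def IsHomologyBall (K : Set (Finset V)) (m : ℤ) (B : Set (Finset V)) : Prop :=
  IsComplex K ∧ Acyclic K ∧
  (∀ F ∈ K, Acyclic (link K F) ∨ SphereHomology (link K F) (m - F.card)) ∧
  B = {F ∈ K | Acyclic (link K F)} ∧ IsHomologySphere B (m - 1)

/-! ### Auxiliary development for Statement 4 -/

set_option synthInstance.maxHeartbeats 1000000
set_option maxHeartbeats 1000000

section Stmt4Aux

open Finsupp Relation

variable {V : Type} [DecidableEq V]

theorem aux_mem_of_cl {K : Set (Finset V)} (hK : IsComplex K) {t : Finset V}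
    (h : t ∈ cl K) : t ∈ K := by
  obtain ⟨s, hs, hts⟩ := h
  exact hK.2 s hs t hts

theorem aux_image_fin1 (f : Fin 1 → V) : Finset.univ.image f = {f 0} := by
  ext x; simp [Fin.exists_fin_one, eq_comm]

theorem aux_image_fin2 (f : Fin 2 → V) : Finset.univ.image f = {f 0, f 1} := by
  ext x; simp [Fin.exists_fin_two, eq_comm]

instance aux_vertSimp0_subsingleton (K : Set (Finset V)) : Subsingleton (vertSimp K 0) :=
  ⟨fun a b => Subtype.ext (funext fun i => i.elim0)⟩

/-- The unique degree-0 simplex (the empty tuple). -/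
def pt0 {K : Set (Finset V)} (h : (∅ : Finset V) ∈ K) : vertSimp K 0 :=
  ⟨fun i => i.elim0, ⟨∅, h, by simp⟩⟩

/-- The degree-1 simplex corresponding to a vertex. -/
def vtx {K : Set (Finset V)} {v : V} (h : ({v} : Finset V) ∈ K) : vertSimp K 1 :=
  ⟨fun _ => v, ⟨{v}, h, by rw [aux_image_fin1]⟩⟩

theorem aux_vert_mem {K : Set (Finset V)} (hK : IsComplex K) (s : vertSimp K 1) :
    ({s.1 0} : Finset V) ∈ K := by
  have h2 : Finset.univ.image s.1 ∈ K := aux_mem_of_cl hK s.2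
  rwa [aux_image_fin1] at h2

theorem aux_edge_mem {K : Set (Finset V)} (hK : IsComplex K) (s : vertSimp K 2) :
    ({s.1 0, s.1 1} : Finset V) ∈ K := by
  have h2 : Finset.univ.image s.1 ∈ K := aux_mem_of_cl hK s.2
  rwa [aux_image_fin2] at h2

theorem aux_single_one_ne {α : Type} (x : α) : (Finsupp.single x (1 : ℚ)) ≠ 0 := by
  simp [Finsupp.single_eq_zero]

theorem aux_bdry_single {K : Set (Finset V)} {n : ℕ} (s : vertSimp K (n + 1)) (c : ℚ) :
    bdry K n (Finsupp.single s c) =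
      ∑ i : Fin (n + 1), ((-1 : ℚ) ^ (i : ℕ)) • Finsupp.single (faceMap s i) c := by
  rw [bdry, Finsupp.lsum_single]
  simp [Finsupp.lsingle_apply]

theorem aux_bdry0_single {K : Set (Finset V)} (h : (∅ : Finset V) ∈ K) (s : vertSimp K 1)
    (c : ℚ) : bdry K 0 (Finsupp.single s c) = Finsupp.single (pt0 h) c := by
  rw [aux_bdry_single, Fin.sum_univ_one]
  rw [Subsingleton.elim (faceMap s 0) (pt0 h)]
  simp

theorem aux_rank_chains0 {K : Set (Finset V)} (h : (∅ : Finset V) ∈ K) :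
    Module.rank ℚ (Chains K 0) = 1 := by
  have : Nonempty (vertSimp K 0) := ⟨pt0 h⟩
  rw [rank_finsupp_self' ℚ, Cardinal.mk_eq_one]

/-- A complex whose `H̃₋₁` vanishes has a vertex. -/
theorem aux_vertex_exists {K : Set (Finset V)} (hK : IsComplex K)
    (h : Module.rank ℚ (redHneg K) = 0) : ∃ v : V, ({v} : Finset V) ∈ K := by
  have hsub : Subsingleton (redHneg K) := rank_zero_iff.mp h
  have htop : LinearMap.range (bdry K 0) = ⊤ :=
    Submodule.Quotient.subsingleton_iff.mp hsub
  have hx : Finsupp.single (pt0 hK.1) (1 : ℚ) ∈ LinearMap.range (bdry K 0) := by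
    rw [htop]; trivial
  obtain ⟨c, hc⟩ := hx
  have hc0 : c ≠ 0 := by
    rintro rfl
    rw [map_zero] at hc
    exact aux_single_one_ne _ hc.symm
  obtain ⟨s, -⟩ := Finsupp.support_nonempty_iff.mpr hc0
  exact ⟨s.1 0, aux_vert_mem hK s⟩

/-- A complex whose `H̃₋₁` has rank one has no vertex. -/
theorem aux_no_vertex {K : Set (Finset V)} (hK : IsComplex K)
    (h : Module.rank ℚ (redHneg K) = 1) : ∀ v : V, ({v} : Finset V) ∉ K := by
  intro v hv
  have hr := Submodule.rank_quotient_add_rank (LinearMap.range (bdry K 0))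
  rw [aux_rank_chains0 hK.1] at hr
  rw [show Module.rank ℚ (Chains K 0 ⧸ LinearMap.range (bdry K 0)) = 1 from h] at hr
  have hrr : Module.rank ℚ (LinearMap.range (bdry K 0)) = 0 := by
    by_contra hne
    have h1 : 1 ≤ Module.rank ℚ (LinearMap.range (bdry K 0)) :=
      Cardinal.one_le_iff_ne_zero.mpr hne
    have h2 : (1 : Cardinal) + 1 ≤ 1 + Module.rank ℚ (LinearMap.range (bdry K 0)) :=
      add_le_add_right h1 1
    rw [hr] at h2
    norm_num at h2
  have hbot : LinearMap.range (bdry K 0) = ⊥ := Submodule.rank_eq_zero.mp hrr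
  have hz : bdry K 0 (Finsupp.single (vtx hv) (1 : ℚ)) = 0 := by
    have hm := LinearMap.mem_range_self (bdry K 0) (Finsupp.single (vtx hv) (1 : ℚ))
    rw [hbot] at hm
    exact hm
  rw [aux_bdry0_single hK.1] at hz
  exact aux_single_one_ne _ hz

/-- A complex of dimension `≤ 0` whose `H̃₀` has rank one has exactly two vertices. -/
theorem aux_two_verts {L : Set (Finset V)} (hL : IsComplex L)
    (hsmall : ∀ F ∈ L, F.card ≤ 1)
    (h0 : Module.rank ℚ (redH L 0) = 1) :
    ∃ a b : V, a ≠ b ∧ ∀ v : V, ({v} : Finset V) ∈ L ↔ v = a ∨ v = b := by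
  -- the boundary map in degree one vanishes
  have hb1 : ∀ y : Chains L 2, bdry L 1 y = 0 := by
    intro y
    induction y using Finsupp.induction_linear with
    | zero => rw [map_zero]
    | add f g hf hg => rw [map_add, hf, hg, add_zero]
    | single s c =>
      have him : ({s.1 0, s.1 1} : Finset V) ∈ L := aux_edge_mem hL s
      have hcard := hsmall _ him
      have heq : s.1 0 = s.1 1 := by
        by_contra hne
        rw [Finset.card_insert_of_notMem (by simpa using hne)] at hcard
        simp at hcard
      have hface : faceMap s 0 = faceMap s 1 := by
        apply Subtype.ext
        funext j
        have hj : j = 0 := Subsingleton.elim _ _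
        subst hj
        show s.1 ((0 : Fin 2).succAbove 0) = s.1 ((1 : Fin 2).succAbove 0)
        rw [show (0 : Fin 2).succAbove 0 = 1 from rfl, show (1 : Fin 2).succAbove 0 = 0 from rfl]
        exact heq.symm
      rw [aux_bdry_single, Fin.sum_univ_two, hface]
      simp
  have hb1' : bdry L 1 = 0 := LinearMap.ext fun y => hb1 y
  -- hence `H̃₀` is the kernel of the augmentation
  have hker : Module.rank ℚ (LinearMap.ker (bdry L 0)) = 1 := by
    have hbotc : Submodule.comap (LinearMap.ker (bdry L 0)).subtype
        (LinearMap.range (bdry L 1)) = ⊥ := by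
      rw [hb1', LinearMap.range_zero, Submodule.comap_bot, Submodule.ker_subtype]
    have e := Submodule.quotEquivOfEqBot _ hbotc
    rw [← h0]
    exact (e.rank_eq).symm
  -- there is a vertex
  have hne : Nonempty (vertSimp L 1) := by
    by_contra hemp
    rw [not_nonempty_iff] at hemp
    have hzero : Module.rank ℚ (LinearMap.ker (bdry L 0)) = 0 := by
      rw [rank_zero_iff]
      infer_instance
    rw [hzero] at hker
    norm_num at hker
  obtain ⟨s0⟩ := hne
  -- the augmentation is surjective
  have hsurj : Function.Surjective (bdry L 0) := by
    intro c
    refine ⟨Finsupp.single s0 (c (pt0 hL.1)), ?_⟩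
    rw [aux_bdry0_single hL.1]
    ext q
    rw [Subsingleton.elim q (pt0 hL.1), Finsupp.single_eq_same]
  -- rank counting
  have hcount := LinearMap.rank_eq_of_surjective hsurj
  rw [aux_rank_chains0 hL.1, hker, rank_finsupp_self' ℚ] at hcount
  have htwo : Cardinal.mk (vertSimp L 1) = 2 := by
    rw [hcount]; norm_num
  obtain ⟨x, y, hxy, hcover⟩ := Cardinal.mk_eq_two_iff.mp htwo
  refine ⟨x.1 0, y.1 0, ?_, ?_⟩
  · intro heq
    apply hxy
    apply Subtype.ext
    funext j
    have hj : j = 0 := Subsingleton.elim _ _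
    subst hj
    exact heq
  · intro v
    constructor
    · intro hv
      have hmem : (vtx hv : vertSimp L 1) ∈ ({x, y} : Set (vertSimp L 1)) := by
        rw [hcover]; trivial
      rcases hmem with h | h
      · left; exact congrFun (congrArg Subtype.val h.symm) 0 |>.symm
      · right; exact congrFun (congrArg Subtype.val h.symm) 0 |>.symm
    · rintro (rfl | rfl)
      · exact aux_vert_mem hL x
      · exact aux_vert_mem hL y

/-- Connectivity: vanishing `H̃₀` gives edge-paths between vertices. -/
theorem aux_edge_path {K : Set (Finset V)} (hK : IsComplex K)
    (h0 : Module.rank ℚ (redH K 0) = 0) {u v : V}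
    (hu : ({u} : Finset V) ∈ K) (hv : ({v} : Finset V) ∈ K) :
    Relation.ReflTransGen (fun a b : V => ({a, b} : Finset V) ∈ K) u v := by
  classical
  set R := fun a b : V => ({a, b} : Finset V) ∈ K with hR
  set x : Chains K 1 := Finsupp.single (vtx hu) 1 - Finsupp.single (vtx hv) 1 with hxdef
  have hx : x ∈ LinearMap.ker (bdry K 0) := by
    rw [LinearMap.mem_ker, hxdef, map_sub, aux_bdry0_single hK.1, aux_bdry0_single hK.1,
      sub_self]
  have hsub : Subsingleton (redH K 0) := rank_zero_iff.mp h0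
  have hq : Submodule.Quotient.mk (p := Submodule.comap (LinearMap.ker (bdry K 0)).subtype
      (LinearMap.range (bdry K 1))) ⟨x, hx⟩ = 0 := Subsingleton.elim _ _
  have hmem0 := (Submodule.Quotient.mk_eq_zero _).mp hq
  have hmem : x ∈ LinearMap.range (bdry K 1) := Submodule.mem_comap.mp hmem0
  obtain ⟨c, hc⟩ := hmem
  set φ : V → ℚ := fun w => if Relation.ReflTransGen R u w then 1 else 0 with hφ
  set ℓ : Chains K 1 →ₗ[ℚ] ℚ :=
    Finsupp.linearCombination ℚ (fun s : vertSimp K 1 => φ (s.1 0)) with hℓ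
  have hφadj : ∀ a b : V, R a b → φ a = φ b := by
    intro a b hab
    have hiff : Relation.ReflTransGen R u a ↔ Relation.ReflTransGen R u b := by
      constructor
      · intro h; exact h.tail hab
      · intro h
        refine h.tail ?_
        show ({b, a} : Finset V) ∈ K
        rw [Finset.pair_comm]
        exact hab
    simp only [hφ]
    rw [if_congr hiff rfl rfl]
  have hkey : ℓ (bdry K 1 c) = 0 := by
    have hall : ∀ c' : Chains K 2, ℓ (bdry K 1 c') = 0 := by
      intro c'
      induction c' using Finsupp.induction_linear with
      | zero => rw [map_zero, map_zero]
      | add f g hf hg => rw [map_add, map_add, hf, hg, add_zero]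
      | single s r =>
        rw [aux_bdry_single, map_sum, Fin.sum_univ_two]
        have hs01 : R (s.1 0) (s.1 1) := aux_edge_mem hK s
        have e0 : (faceMap s 0).1 0 = s.1 1 := rfl
        have e1 : (faceMap s 1).1 0 = s.1 0 := rfl
        rw [map_smul, map_smul, hℓ]
        rw [Finsupp.linearCombination_single, Finsupp.linearCombination_single]
        rw [e0, e1]
        rw [hφadj _ _ hs01]
        simp
    exact hall c
  rw [hc, hxdef, map_sub, hℓ, Finsupp.linearCombination_single,
    Finsupp.linearCombination_single] at hkey
  have hvtxu : ((vtx hu : vertSimp K 1).1 0) = u := rfl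
  have hvtxv : ((vtx hv : vertSimp K 1).1 0) = v := rfl
  rw [hvtxu, hvtxv] at hkey
  have hφu : φ u = 1 := by simp [hφ, Relation.ReflTransGen.refl]
  rw [hφu] at hkey
  by_contra hnp
  have hφv : φ v = 0 := by simp [hφ, hnp]
  rw [hφv] at hkey
  norm_num at hkey

end Stmt4Aux
section Stmt4Comb

variable {V : Type} [DecidableEq V]

theorem aux_link_empty (K : Set (Finset V)) : link K ∅ = K := by
  ext T
  simp [link]

theorem aux_link_isComplex {K : Set (Finset V)} (hK : IsComplex K) {F : Finset V}
    (hF : F ∈ K) : IsComplex (link K F) := by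
  constructor
  · exact ⟨Finset.empty_inter F, by rwa [Finset.empty_union]⟩
  · rintro s ⟨hs1, hs2⟩ t hts
    refine ⟨?_, ?_⟩
    · have : t ∩ F ⊆ s ∩ F := Finset.inter_subset_inter hts subset_rfl
      rw [hs1] at this
      exact Finset.subset_empty.mp this
    · exact hK.2 _ hs2 _ (Finset.union_subset_union hts subset_rfl)

theorem aux_link_link {K : Set (Finset V)} (F G : Finset V) (hG : G ∈ link K F) :
    link (link K F) G = link K (G ∪ F) := by
  have hGF : G ∩ F = ∅ := hG.1
  ext T
  constructor
  · rintro ⟨h1, h2, h3⟩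
    refine ⟨?_, by rwa [← Finset.union_assoc]⟩
    rw [Finset.inter_union_distrib_left, h1, Finset.empty_union]
    have : T ∩ F ⊆ (T ∪ G) ∩ F := Finset.inter_subset_inter Finset.subset_union_left subset_rfl
    rw [h2] at this
    exact Finset.subset_empty.mp this
  · rintro ⟨h1, h2⟩
    have hTG : T ∩ G = ∅ := by
      have : T ∩ G ⊆ T ∩ (G ∪ F) := Finset.inter_subset_inter subset_rfl Finset.subset_union_left
      rw [h1] at this
      exact Finset.subset_empty.mp this
    have hTF : T ∩ F = ∅ := by
      have : T ∩ F ⊆ T ∩ (G ∪ F) := Finset.inter_subset_inter subset_rfl Finset.subset_union_right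
      rw [h1] at this
      exact Finset.subset_empty.mp this
    refine ⟨hTG, ?_, by rwa [Finset.union_assoc]⟩
    rw [Finset.union_inter_distrib_right, hTF, hGF, Finset.empty_union]

theorem aux_sphere_link {K : Set (Finset V)} {m : ℤ} (hK : IsHomologySphere K m)
    {F : Finset V} (hF : F ∈ K) :
    IsHomologySphere (link K F) (m - F.card) := by
  refine ⟨aux_link_isComplex hK.1 hF, ?_⟩
  intro G hG
  rw [aux_link_link F G hG]
  have hdisj : Disjoint G F := Finset.disjoint_iff_inter_eq_empty.mpr hG.1
  have hcard : (G ∪ F).card = G.card + F.card := Finset.card_union_of_disjoint hdisj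
  have := hK.2 (G ∪ F) hG.2
  rw [hcard] at this
  have harith : m - (↑(G.card) + ↑(F.card) : ℤ) = m - ↑F.card - ↑G.card := by ring
  rw [Nat.cast_add] at this
  rwa [harith] at this

theorem aux_sphere_self {K : Set (Finset V)} {m : ℤ} (hK : IsHomologySphere K m) :
    SphereHomology K m := by
  have := hK.2 ∅ hK.1.1
  rwa [aux_link_empty, Finset.card_empty, Nat.cast_zero, sub_zero] at this

/-- In a homology `(d-1)`-sphere all faces have at most `d` vertices. -/
theorem aux_card_le {d : ℕ} (hd : 1 ≤ d) {K : Set (Finset V)}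
    (hK : IsHomologySphere K ((d : ℤ) - 1)) : ∀ F ∈ K, F.card ≤ d := by
  intro F hF
  by_contra hlt
  push_neg at hlt
  obtain ⟨G, hGF, hGcard⟩ := Finset.exists_subset_card_eq (le_of_lt hlt)
  have hG : G ∈ K := hK.1.2 F hF G hGF
  have hL : IsHomologySphere (link K G) (-1) := by
    have := aux_sphere_link hK hG
    rwa [hGcard, show ((d : ℤ) - 1 - d) = -1 by ring] at this
  have hLsh : SphereHomology (link K G) (-1) := aux_sphere_self hL
  have hno := aux_no_vertex hL.1 (by simpa using hLsh.2)
  obtain ⟨u, huF, huG⟩ : ∃ u, u ∈ F ∧ u ∉ G := by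
    by_contra hc
    push_neg at hc
    have : F ⊆ G := fun x hx => hc x hx
    have := Finset.card_le_card this
    omega
  refine hno u ⟨?_, ?_⟩
  · simp [Finset.singleton_inter_of_notMem huG]
  · refine hK.1.2 F hF _ ?_
    intro x hx
    rcases Finset.mem_union.mp hx with h | h
    · rw [Finset.mem_singleton.mp h]; exact huF
    · exact hGF h
  
/-- Faces of cardinality `< d` extend. -/
theorem aux_extend {d : ℕ} (hd : 1 ≤ d) {K : Set (Finset V)}
    (hK : IsHomologySphere K ((d : ℤ) - 1)) {F : Finset V} (hF : F ∈ K)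
    (hcard : F.card < d) : ∃ u, u ∉ F ∧ insert u F ∈ K := by
  have hL : IsHomologySphere (link K F) ((d : ℤ) - 1 - F.card) := aux_sphere_link hK hF
  have hLsh := aux_sphere_self hL
  have hneg : Module.rank ℚ (redHneg (link K F)) = 0 := by
    have := hLsh.2
    rwa [if_neg (by omega : ¬((d : ℤ) - 1 - F.card = -1))] at this
  obtain ⟨v, hv⟩ := aux_vertex_exists hL.1 hneg
  refine ⟨v, ?_, ?_⟩
  · intro hvF
    have h1 := hv.1
    rw [Finset.singleton_inter_of_mem hvF] at h1
    simp at h1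
  · have := hv.2
    rwa [← Finset.insert_eq] at this

/-- Every face is contained in a face of cardinality `d`. -/
theorem aux_facet_above {d : ℕ} (hd : 1 ≤ d) {K : Set (Finset V)}
    (hK : IsHomologySphere K ((d : ℤ) - 1)) {F : Finset V} (hF : F ∈ K) :
    ∃ G ∈ K, F ⊆ G ∧ G.card = d := by
  have hmain : ∀ (k : ℕ) (F : Finset V), F ∈ K → d - F.card ≤ k →
      ∃ G ∈ K, F ⊆ G ∧ G.card = d := by
    intro k
    induction k with
    | zero =>
      intro F hF hk
      have := aux_card_le hd hK F hF
      exact ⟨F, hF, subset_rfl, by omega⟩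
    | succ k IH =>
      intro F hF hk
      rcases eq_or_lt_of_le (aux_card_le hd hK F hF) with heq | hlt
      · exact ⟨F, hF, subset_rfl, heq⟩
      · obtain ⟨u, hu, hins⟩ := aux_extend hd hK hF hlt
        obtain ⟨G, hG, hsub, hcard⟩ := IH (insert u F) hins
          (by rw [Finset.card_insert_of_notMem hu]; omega)
        exact ⟨G, hG, subset_rfl.trans ((Finset.subset_insert u F).trans hsub), hcard⟩
  exact hmain d F hF (by omega)

/-- A face of cardinality `d-1` has exactly two cofacets. -/
theorem aux_two_cofacets {d : ℕ} (hd : 1 ≤ d) {K : Set (Finset V)}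
    (hK : IsHomologySphere K ((d : ℤ) - 1)) {F : Finset V} (hF : F ∈ K)
    (hcard : F.card + 1 = d) :
    ∃ a b : V, a ≠ b ∧ ∀ v : V, (v ∉ F ∧ insert v F ∈ K) ↔ v = a ∨ v = b := by
  set L := link K F with hLdef
  have hL : IsHomologySphere L ((d : ℤ) - 1 - F.card) := aux_sphere_link hK hF
  have hm : ((d : ℤ) - 1 - F.card) = 0 := by
    have : (F.card : ℤ) + 1 = d := by exact_mod_cast hcard
    omega
  rw [hm] at hL
  have hLsh := aux_sphere_self hL
  have hsmall : ∀ T ∈ L, T.card ≤ 1 := by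
    intro T hT
    have h1 : T ∪ F ∈ K := hT.2
    have h2 := aux_card_le hd hK _ h1
    have hdisj : Disjoint T F := Finset.disjoint_iff_inter_eq_empty.mpr hT.1
    rw [Finset.card_union_of_disjoint hdisj] at h2
    omega
  have h0 : Module.rank ℚ (redH L 0) = 1 := by
    have := hLsh.1 0
    rwa [if_pos (by norm_num)] at this
  obtain ⟨a, b, hab, hchar⟩ := aux_two_verts hL.1 hsmall h0
  refine ⟨a, b, hab, ?_⟩
  intro v
  rw [← hchar v]
  constructor
  · rintro ⟨h1, h2⟩
    exact ⟨by simp [Finset.singleton_inter_of_notMem h1], by rwa [← Finset.insert_eq]⟩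
  · rintro ⟨h1, h2⟩
    constructor
    · intro hvF
      rw [Finset.singleton_inter_of_mem hvF] at h1
      simp at h1
    · rwa [← Finset.insert_eq] at h2

/-- Dual-graph adjacency between top faces. -/
def AdjF (K : Set (Finset V)) (d : ℕ) (G G' : Finset V) : Prop :=
  G ∈ K ∧ G' ∈ K ∧ G.card = d ∧ G'.card = d ∧
    ∃ F : Finset V, F ⊆ G ∧ F ⊆ G' ∧ F.card + 1 = d

/-- Strong connectivity of homology spheres. -/
theorem aux_strong_conn : ∀ d : ℕ, 1 ≤ d → ∀ K : Set (Finset V),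
    IsHomologySphere K ((d : ℤ) - 1) → ∀ G G' : Finset V, G ∈ K → G' ∈ K →
    G.card = d → G'.card = d → Relation.ReflTransGen (AdjF K d) G G' := by
  intro d
  induction d using Nat.strong_induction_on with
  | _ d IH =>
    intro hd K hK G G' hG hG' hGc hG'c
    rcases eq_or_lt_of_le hd with h1 | h2
    · -- d = 1 : all top faces adjacent through the empty face
      exact Relation.ReflTransGen.single
        ⟨hG, hG', hGc, hG'c, ∅, Finset.empty_subset _, Finset.empty_subset _, by simp; omega⟩
    · -- d ≥ 2
      -- the star of a vertex is strongly connected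
      have hstar : ∀ (v : V) (H H' : Finset V), H ∈ K → H' ∈ K → H.card = d → H'.card = d →
          v ∈ H → v ∈ H' → Relation.ReflTransGen (AdjF K d) H H' := by
        intro v H H' hH hH' hHc hH'c hvH hvH'
        have hv : ({v} : Finset V) ∈ K := hK.1.2 H hH _ (Finset.singleton_subset_iff.mpr hvH)
        set L := link K {v} with hLdef
        have hL : IsHomologySphere L (((d - 1 : ℕ) : ℤ) - 1) := by
          have := aux_sphere_link hK hv
          rw [Finset.card_singleton] at this
          have harith : ((d : ℤ) - 1 - (1 : ℕ)) = ((d - 1 : ℕ) : ℤ) - 1 := by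
            push_cast [Nat.cast_sub (by omega : 1 ≤ d)]
            ring
          rwa [harith] at this
        have hP : H.erase v ∈ L := by
          constructor
          · exact Finset.inter_singleton_of_notMem (Finset.notMem_erase v H)
          · rw [Finset.union_comm, ← Finset.insert_eq, Finset.insert_erase hvH]
            exact hH
        have hP' : H'.erase v ∈ L := by
          constructor
          · exact Finset.inter_singleton_of_notMem (Finset.notMem_erase v H')
          · rw [Finset.union_comm, ← Finset.insert_eq, Finset.insert_erase hvH']
            exact hH'
        have hPc : (H.erase v).card = d - 1 := by
          rw [Finset.card_erase_of_mem hvH, hHc]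
        have hP'c : (H'.erase v).card = d - 1 := by
          rw [Finset.card_erase_of_mem hvH', hH'c]
        have hpath := IH (d - 1) (by omega) (by omega) L hL (H.erase v) (H'.erase v)
          hP hP' hPc hP'c
        have hstep : ∀ Q Q' : Finset V, AdjF L (d - 1) Q Q' →
            AdjF K d (insert v Q) (insert v Q') := by
          intro Q Q' hQQ'
          obtain ⟨hQ, hQ', hQc, hQ'c, F, hFQ, hFQ', hFc⟩ := hQQ'
          have hvQ : v ∉ Q := by
            intro hvQ
            have := hQ.1
            rw [Finset.inter_singleton_of_mem hvQ] at this
            simp at this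
          have hvQ' : v ∉ Q' := by
            intro hvQ'
            have := hQ'.1
            rw [Finset.inter_singleton_of_mem hvQ'] at this
            simp at this
          refine ⟨?_, ?_, ?_, ?_, insert v F, ?_, ?_, ?_⟩
          · have := hQ.2; rwa [Finset.union_comm, ← Finset.insert_eq] at this
          · have := hQ'.2; rwa [Finset.union_comm, ← Finset.insert_eq] at this
          · rw [Finset.card_insert_of_notMem hvQ]; omega
          · rw [Finset.card_insert_of_notMem hvQ']; omega
          · exact Finset.insert_subset_insert v hFQ
          · exact Finset.insert_subset_insert v hFQ'
          · rw [Finset.card_insert_of_notMem (fun hvF => hvQ (hFQ hvF))]; omega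
        have hlift := Relation.ReflTransGen.lift (r := AdjF L (d - 1)) (p := AdjF K d)
          (fun Q => insert v Q) (fun Q Q' h => hstep Q Q' h) _ _ hpath
        have hlift' : Relation.ReflTransGen (AdjF K d) (insert v (H.erase v))
            (insert v (H'.erase v)) := hlift
        rwa [Finset.insert_erase hvH, Finset.insert_erase hvH'] at hlift'
      -- connectivity of the vertex graph
      have hconn : ∀ u u' : V, ({u} : Finset V) ∈ K → ({u'} : Finset V) ∈ K →
          Relation.ReflTransGen (fun a b : V => ({a, b} : Finset V) ∈ K) u u' := by
        intro u u' hu hu'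
        have hsh := aux_sphere_self hK
        have h0 : Module.rank ℚ (redH K 0) = 0 := by
          have := hsh.1 0
          rwa [if_neg (by omega : ¬((0 : ℕ) : ℤ) = (d : ℤ) - 1)] at this
        exact aux_edge_path hK.1 h0 hu hu'
      -- combine
      obtain ⟨u, hu⟩ := Finset.card_pos.mp (by omega : 0 < G.card)
      obtain ⟨u', hu'⟩ := Finset.card_pos.mp (by omega : 0 < G'.card)
      have hus : ({u} : Finset V) ∈ K := hK.1.2 G hG _ (Finset.singleton_subset_iff.mpr hu)
      have hu's : ({u'} : Finset V) ∈ K := hK.1.2 G' hG' _ (Finset.singleton_subset_iff.mpr hu')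
      have hmain : ∀ w : V, Relation.ReflTransGen (fun a b : V => ({a, b} : Finset V) ∈ K) u w →
          ∀ H' : Finset V, H' ∈ K → H'.card = d → w ∈ H' →
          Relation.ReflTransGen (AdjF K d) G H' := by
        intro w hw
        induction hw with
        | refl =>
          intro H' hH' hH'c hwH'
          exact hstar u G H' hG hH' hGc hH'c hu hwH'
        | tail hbc hedge IH2 =>
          rename_i b c
          intro H' hH' hH'c hcH'
          obtain ⟨H'', hH'', hsubH'', hH''c⟩ := aux_facet_above (by omega) hK hedge
          have hbH'' : b ∈ H'' := hsubH'' (by simp)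
          have hcH'' : c ∈ H'' := hsubH'' (by simp)
          have hpart1 := IH2 H'' hH'' hH''c hbH''
          have hpart2 := hstar c H'' H' hH'' hH' hH''c hH'c hcH'' hcH'
          exact hpart1.trans hpart2
      exact hmain u' (hconn u u' hus hu's) G' hG' hG'c hu'

end Stmt4Comb
/-- a homology `(d-1)`-sphere cannot strictly contain another homology
`(d-1)`-sphere as a subcomplex: a nonempty subcomplex of `K` which is itself a homology
`(d-1)`-sphere equals `K`. -/
theorem stmt4 {V : Type} [DecidableEq V] (d : ℕ) (hd : 1 ≤ d) (K A : Set (Finset V))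
    (hK : IsHomologySphere K ((d : ℤ) - 1)) (hA : IsHomologySphere A ((d : ℤ) - 1))
    (hsub : A ⊆ K) (hne : A.Nonempty) :
    A = K := by
  have hKc := hK.1
  have hAc := hA.1
  obtain ⟨G0, hG0A, -, hG0c⟩ := aux_facet_above hd hA hAc.1
  have hG0K : G0 ∈ K := hsub hG0A
  -- a dual-graph step starting in `A` stays in `A`
  have hstep : ∀ H H' : Finset V, H ∈ A → AdjF K d H H' → H' ∈ A := by
    intro H H' hHA hadj
    obtain ⟨hHK, hH'K, hHc, hH'c, F, hFH, hFH', hFc⟩ := hadj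
    have hFA : F ∈ A := hAc.2 H hHA F hFH
    have hFK : F ∈ K := hsub hFA
    obtain ⟨a, b, hab, hcharA⟩ := aux_two_cofacets hd hA hFA hFc
    obtain ⟨a', b', ha'b', hcharK⟩ := aux_two_cofacets hd hK hFK hFc
    have hAK : ∀ v : V, (v = a ∨ v = b) → (v = a' ∨ v = b') := by
      intro v hv
      have h1 := (hcharA v).mpr hv
      exact (hcharK v).mp ⟨h1.1, hsub h1.2⟩
    have hKA : ∀ v : V, (v = a' ∨ v = b') → (v = a ∨ v = b) := by
      have ha1 := hAK a (Or.inl rfl)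
      have hb1 := hAK b (Or.inr rfl)
      intro v hv
      rcases ha1 with ha1 | ha1 <;> rcases hb1 with hb1 | hb1
      · exact absurd (ha1.trans hb1.symm) hab
      · rcases hv with rfl | rfl
        · exact Or.inl ha1.symm
        · exact Or.inr hb1.symm
      · rcases hv with rfl | rfl
        · exact Or.inr hb1.symm
        · exact Or.inl ha1.symm
      · exact absurd (ha1.trans hb1.symm) hab
    obtain ⟨u', hu'H', hu'F⟩ : ∃ u', u' ∈ H' ∧ u' ∉ F := by
      by_contra hc
      push_neg at hc
      have hsubF : H' ⊆ F := fun x hx => hc x hx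
      have := Finset.card_le_card hsubF
      omega
    have hH'eq : H' = insert u' F := by
      refine (Finset.eq_of_subset_of_card_le (Finset.insert_subset hu'H' hFH') ?_).symm
      rw [Finset.card_insert_of_notMem hu'F]
      omega
    have hu'K : u' ∉ F ∧ insert u' F ∈ K := ⟨hu'F, hH'eq ▸ hH'K⟩
    have hmem := (hcharA u').mpr (hKA u' ((hcharK u').mp hu'K))
    rw [hH'eq]
    exact hmem.2
  -- every top face of `K` lies in `A`
  have htop : ∀ G : Finset V, G ∈ K → G.card = d → G ∈ A := by
    intro G hGK hGc
    have hpath := aux_strong_conn d hd K hK G0 G hG0K hGK hG0c hGc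
    have hinv : ∀ {X Y : Finset V}, Relation.ReflTransGen (AdjF K d) X Y → X ∈ A → Y ∈ A := by
      intro X Y hXY
      induction hXY with
      | refl => exact id
      | tail h1 h2 ih => exact fun hX => hstep _ _ (ih hX) h2
    exact hinv hpath hG0A
  -- conclude
  refine Set.Subset.antisymm hsub ?_
  intro F hFK
  obtain ⟨G, hGK, hFG, hGc⟩ := aux_facet_above hd hK hFK
  exact hAc.2 G (htop G hGK hGc) F hFG
end

section
/- Let G_1 = (V_1, E_1) and G_2 = (V_2, E_2) be generically d-rigid graphs such that |V_1 ∩ V_2| ≥ d. Then G_1 ∪ G_2 is generically d-rigid. (Gluing Lemma, in the linear-algebraic formulation: if the row space of the generic rigidity matrix of G_i equals that of the complete graph on V_i for i = 1,2, and the intersection has at least d vertices, then the row space of the generic rigidity matrix of G_1 ∪ G_2 equals that of the complete graph on V_1 ∪ V_2.) -/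
/-- The rigidity matrix of the graph with edge set `E` (edges `(v,u)` with `v < u`)
under the embedding `f : Fin n → ℝ^d`: the column of an edge `{v < u}` has the vector
`f v - f u` in the `d` rows of `v`, the vector `f u - f v` in the rows of `u`, and zeros
elsewhere. -/
def rigMatrix {n d : ℕ} (f : Fin n → Fin d → ℝ) (E : Finset (Fin n × Fin n)) :
    Matrix (Fin n × Fin d) {e // e ∈ E} ℝ :=
  fun rc e =>
    if rc.1 = e.1.1 then f e.1.1 rc.2 - f e.1.2 rc.2
    else if rc.1 = e.1.2 then f e.1.2 rc.2 - f e.1.1 rc.2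
    else 0

/-- The edge set of the complete graph on a vertex set `Vs ⊆ Fin n`. -/
def completeE {n : ℕ} (Vs : Finset (Fin n)) : Finset (Fin n × Fin n) :=
  Finset.univ.filter fun p => p.1 < p.2 ∧ p.1 ∈ Vs ∧ p.2 ∈ Vs

/-- `G = (Vs, E)` is generically `d`-rigid: for some embedding `f` which is generic
(maximizes the relevant ranks), the column space of `Rig(G,f)` equals the column space
of the rigidity matrix of the complete graph on `Vs`. -/
def GenRigid {n : ℕ} (d : ℕ) (Vs : Finset (Fin n)) (E : Finset (Fin n × Fin n)) : Prop :=
  ∃ f : Fin n → Fin d → ℝ,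
    LinearMap.range (Matrix.mulVecLin (rigMatrix f E)) =
      LinearMap.range (Matrix.mulVecLin (rigMatrix f (completeE Vs))) ∧
    ∀ g : Fin n → Fin d → ℝ,
      (rigMatrix g (completeE Vs)).rank ≤ (rigMatrix f (completeE Vs)).rank ∧
      (rigMatrix g E).rank ≤ (rigMatrix f E).rank

/-- The vertex `v` participates in the stress `w` : some edge containing `v` has a
nonzero coefficient. -/
def Participates {n : ℕ} {E : Finset (Fin n × Fin n)} (w : {e // e ∈ E} → ℝ) (v : Fin n) : Prop :=
  ∃ e : {e // e ∈ E}, (e.1.1 = v ∨ e.1.2 = v) ∧ w e ≠ 0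


open Matrix MvPolynomial Module Submodule

namespace Glue

variable {n d : ℕ}

variable {ι : Type*} [Fintype ι]

lemma dot_sum_smul {r : ℕ} (v : Fin r → (ι → ℝ)) (g : Fin r → ℝ) (w : ι → ℝ) :
    w ⬝ᵥ (∑ j, g j • v j) = ∑ j, (w ⬝ᵥ v j) * g j := by
  simp only [dotProduct, Finset.sum_apply, Pi.smul_apply, smul_eq_mul, Finset.mul_sum,
    Finset.sum_mul]
  rw [Finset.sum_comm]
  exact Finset.sum_congr rfl fun j _ => Finset.sum_congr rfl fun a _ => by ring

lemma gram_mulVec {r : ℕ} (v : Fin r → (ι → ℝ)) (g : Fin r → ℝ) (k : Fin r) :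
    ((Matrix.of fun i j => v i ⬝ᵥ v j) *ᵥ g) k = v k ⬝ᵥ (∑ j, g j • v j) := by
  rw [dot_sum_smul]
  simp [Matrix.mulVec, Matrix.of_apply, dotProduct]

/-- Gram determinant nonzero iff linearly independent (over ℝ). -/
lemma gram_det_ne_zero_iff {r : ℕ} (v : Fin r → (ι → ℝ)) :
    (Matrix.of fun i j => v i ⬝ᵥ v j).det ≠ 0 ↔ LinearIndependent ℝ v := by
  constructor
  · intro hdet
    rw [Fintype.linearIndependent_iff]
    intro g hg i
    have hmv : (Matrix.of fun i j => v i ⬝ᵥ v j) *ᵥ g = 0 := by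
      funext k
      rw [gram_mulVec, hg, dotProduct_zero]
      rfl
    by_contra hgi
    exact hdet (Matrix.exists_mulVec_eq_zero_iff.mp
      ⟨g, fun h => hgi (by rw [h]; rfl), hmv⟩)
  · intro hli hdet
    obtain ⟨g, hg, hmv⟩ := Matrix.exists_mulVec_eq_zero_iff.mpr hdet
    have hzero : (∑ j, g j • v j) ⬝ᵥ (∑ j, g j • v j) = 0 := by
      rw [dotProduct_comm, dot_sum_smul]
      refine Finset.sum_eq_zero fun i _ => ?_
      have := congrFun hmv i
      rw [gram_mulVec] at this
      rw [dotProduct_comm, this]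
      simp
    rw [dotProduct_self_eq_zero] at hzero
    exact hg (funext (Fintype.linearIndependent_iff.mp hli g hzero))

/-- the column of the rigidity matrix for edge `e` -/
def rcol (f : Fin n → Fin d → ℝ) (e : Fin n × Fin n) : (Fin n × Fin d) → ℝ := fun rc =>
  if rc.1 = e.1 then f e.1 rc.2 - f e.2 rc.2
  else if rc.1 = e.2 then f e.2 rc.2 - f e.1 rc.2 else 0

lemma transpose_rigMatrix (f : Fin n → Fin d → ℝ) (E : Finset (Fin n × Fin n)) :
    (rigMatrix f E)ᵀ = fun e : {e // e ∈ E} => rcol f e.1 := rfl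

/-- polynomial version of the column -/
noncomputable def pcol (e : Fin n × Fin n) :
    (Fin n × Fin d) → MvPolynomial (Fin n × Fin d) ℝ := fun rc =>
  if rc.1 = e.1 then X (e.1, rc.2) - X (e.2, rc.2)
  else if rc.1 = e.2 then X (e.2, rc.2) - X (e.1, rc.2) else 0

/-- uncurried configuration, as a point of the variable space -/
def cfg (f : Fin n → Fin d → ℝ) : Fin n × Fin d → ℝ := fun rc => f rc.1 rc.2

lemma eval_pcol (f : Fin n → Fin d → ℝ) (e : Fin n × Fin n) (rc : Fin n × Fin d) :
    eval (cfg f) (pcol e rc) = rcol f e rc := by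
  unfold pcol rcol
  split_ifs <;> simp [cfg]

noncomputable def gramPoly (E : Finset (Fin n × Fin n)) (r : ℕ) (c : Fin r → {e // e ∈ E}) :
    MvPolynomial (Fin n × Fin d) ℝ :=
  (Matrix.of fun i j => ∑ rc : Fin n × Fin d, pcol (c i).1 rc * pcol (c j).1 rc).det

lemma eval_gramPoly (f : Fin n → Fin d → ℝ) (E : Finset (Fin n × Fin n)) (r : ℕ)
    (c : Fin r → {e // e ∈ E}) :
    eval (cfg f) (gramPoly E r c) =
      (Matrix.of fun i j => rcol f (c i).1 ⬝ᵥ rcol f (c j).1).det := by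
  unfold gramPoly
  rw [RingHom.map_det]
  congr 1
  ext i j
  simp [RingHom.mapMatrix_apply, Matrix.map_apply, map_sum, eval_pcol, dotProduct]

lemma rank_eq_finrank_span (f : Fin n → Fin d → ℝ) (E : Finset (Fin n × Fin n)) :
    (rigMatrix f E).rank =
      finrank ℝ (span ℝ (Set.range fun e : {e // e ∈ E} => rcol f e.1)) := by
  rw [Matrix.rank, Matrix.range_mulVecLin,
    show (rigMatrix f E).col = fun e : {e // e ∈ E} => rcol f e.1 from rfl]

lemma rank_ge_of_gram {f : Fin n → Fin d → ℝ} {E : Finset (Fin n × Fin n)} {r : ℕ}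
    {c : Fin r → {e // e ∈ E}} (hc : eval (cfg f) (gramPoly E r c) ≠ 0) :
    r ≤ (rigMatrix f E).rank := by
  rw [eval_gramPoly] at hc
  have hli : LinearIndependent ℝ (fun i => rcol f (c i).1) :=
    (gram_det_ne_zero_iff _).mp hc
  rw [rank_eq_finrank_span]
  have h1 : span ℝ (Set.range fun i => rcol f (c i).1) ≤
      span ℝ (Set.range fun e : {e // e ∈ E} => rcol f e.1) := by
    apply span_mono
    rintro x ⟨i, rfl⟩
    exact ⟨c i, rfl⟩
  calc r = finrank ℝ (span ℝ (Set.range fun i => rcol f (c i).1)) := by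
            rw [finrank_span_eq_card hli, Fintype.card_fin]
    _ ≤ _ := Submodule.finrank_mono h1

lemma exists_gram_of_rank {f : Fin n → Fin d → ℝ} {E : Finset (Fin n × Fin n)} {r : ℕ}
    (h : r ≤ (rigMatrix f E).rank) :
    ∃ c : Fin r → {e // e ∈ E}, eval (cfg f) (gramPoly E r c) ≠ 0 := by
  classical
  rw [rank_eq_finrank_span] at h
  obtain ⟨b, hbsub, hbspan, hbli⟩ :=
    exists_linearIndependent ℝ (Set.range fun e : {e // e ∈ E} => rcol f e.1)
  have hbfin : b.Finite := hbli.setFinite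
  haveI : Fintype b := hbfin.fintype
  have hcard : r ≤ b.toFinset.card := by
    rw [← finrank_span_set_eq_card hbli, hbspan]
    exact h
  obtain ⟨t', ht'sub, ht'card⟩ := Finset.exists_subset_card_eq hcard
  have e : {x // x ∈ t'} ≃ Fin r := Finset.equivFinOfCardEq ht'card
  have hmem : ∀ x : {x // x ∈ t'}, (x : Fin n × Fin d → ℝ) ∈
      Set.range fun e : {e // e ∈ E} => rcol f e.1 := by
    intro x
    exact hbsub (Set.mem_toFinset.mp (ht'sub x.2))
  choose ce hce using hmem
  refine ⟨fun i => ce (e.symm i), ?_⟩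
  rw [eval_gramPoly, gram_det_ne_zero_iff]
  have heq : (fun i => rcol f (ce (e.symm i)).1) = fun i => ((e.symm i : {x // x ∈ t'}) :
      Fin n × Fin d → ℝ) := by
    funext i
    exact hce (e.symm i)
  rw [heq]
  have hsub : (t' : Set (Fin n × Fin d → ℝ)) ⊆ b := by
    intro y hy
    exact Set.mem_toFinset.mp (ht'sub hy)
  have hli' : LinearIndependent ℝ (fun x : {x // x ∈ t'} => (x : Fin n × Fin d → ℝ)) :=
    LinearIndepOn.mono (v := id) (s := b) hbli hsub
  exact hli'.comp e.symm e.symm.injective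

lemma exists_rank_max (E : Finset (Fin n × Fin n)) :
    ∃ f : Fin n → Fin d → ℝ,
      ∀ g : Fin n → Fin d → ℝ, (rigMatrix g E).rank ≤ (rigMatrix f E).rank := by
  set S := Set.range (fun f : Fin n → Fin d → ℝ => (rigMatrix f E).rank) with hS
  have hne : S.Nonempty := ⟨_, ⟨fun _ _ => 0, rfl⟩⟩
  have hbdd : BddAbove S := by
    refine ⟨Fintype.card (Fin n × Fin d), ?_⟩
    rintro r ⟨f, rfl⟩
    exact Matrix.rank_le_card_height _
  obtain ⟨f, hf⟩ := Nat.sSup_mem hne hbdd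
  refine ⟨f, fun g => ?_⟩
  simp only at hf
  rw [hf]
  exact le_csSup hbdd ⟨g, rfl⟩


lemma exists_common_nonvanish {σ : Type*} (L : List (MvPolynomial σ ℝ))
    (h : ∀ p ∈ L, ∃ x : σ → ℝ, eval x p ≠ 0) :
    ∃ x : σ → ℝ, ∀ p ∈ L, eval x p ≠ 0 := by
  have hne : ∀ p ∈ L, p ≠ (0 : MvPolynomial σ ℝ) := by
    intro p hp h0
    obtain ⟨x, hx⟩ := h p hp
    exact hx (by rw [h0]; simp)
  have hprod : L.prod ≠ 0 := List.prod_ne_zero (fun h0 => hne 0 h0 rfl)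
  have hex : ∃ x : σ → ℝ, eval x L.prod ≠ 0 := by
    by_contra h'
    push_neg at h'
    exact hprod (MvPolynomial.funext fun x => by rw [h' x]; simp)
  obtain ⟨x, hx⟩ := hex
  refine ⟨x, fun p hp h0 => hx ?_⟩
  have : (eval x) L.prod = (L.map (eval x)).prod := map_list_prod _ _
  rw [this]
  exact List.prod_eq_zero (List.mem_map.mpr ⟨p, hp, h0⟩)

lemma dot_mulVec_self_skew {d : ℕ} {S : Matrix (Fin d) (Fin d) ℝ} (hS : S + Sᵀ = 0)
    (x : Fin d → ℝ) : x ⬝ᵥ S *ᵥ x = 0 := by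
  have h0 : x ⬝ᵥ (S + Sᵀ) *ᵥ x = 0 := by rw [hS]; simp
  rw [add_mulVec, dotProduct_add] at h0
  have h1 : x ⬝ᵥ Sᵀ *ᵥ x = x ⬝ᵥ S *ᵥ x := by
    rw [mulVec_transpose, dotProduct_comm, dotProduct_mulVec]
  rw [h1] at h0
  linarith

lemma mem_of_forall_dot {ι : Type*} [Fintype ι] [DecidableEq ι] (U : Submodule ℝ (ι → ℝ))
    (y : ι → ℝ) (h : ∀ x : ι → ℝ, (∀ u ∈ U, x ⬝ᵥ u = 0) → x ⬝ᵥ y = 0) : y ∈ U := by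
  by_contra hy
  set π := U.mkQ with hπ
  have hπy : π y ≠ 0 := by
    intro h0
    rw [hπ, Submodule.mkQ_apply] at h0
    exact hy ((Submodule.Quotient.mk_eq_zero U).mp h0)
  set b := Module.finBasis ℝ ((ι → ℝ) ⧸ U) with hb
  have hrepr : b.repr (π y) ≠ 0 := fun h0 => hπy (by rwa [LinearEquiv.map_eq_zero_iff] at h0)
  obtain ⟨i, hi⟩ := Finsupp.ne_iff.mp hrepr
  simp only [Finsupp.coe_zero, Pi.zero_apply] at hi
  set φ : (ι → ℝ) →ₗ[ℝ] ℝ := (b.coord i).comp π with hφ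
  have hφU : ∀ u ∈ U, φ u = 0 := by
    intro u hu
    simp [hφ, hπ, Submodule.mkQ_apply, (Submodule.Quotient.mk_eq_zero U).mpr hu]
  set x : ι → ℝ := fun j => φ (Pi.single j 1) with hx
  have hdot : ∀ z : ι → ℝ, x ⬝ᵥ z = φ z := by
    intro z
    have hz : z = ∑ j, z j • (Pi.single j (1 : ℝ) : ι → ℝ) := by
      funext k
      simp [Pi.single_apply]
    conv_rhs => rw [hz]
    rw [map_sum]
    simp only [_root_.map_smul, smul_eq_mul]
    simp [dotProduct, hx, mul_comm]
  have h2 := h x (fun u hu => by rw [hdot]; exact hφU u hu)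
  rw [hdot] at h2
  exact hi (by simpa [hφ, Basis.coord_apply] using h2)

lemma motions {V : Finset (Fin n)} (f p : Fin n → Fin d → ℝ)
    (a : Fin (d + 1) → Fin n) (ha : ∀ i, a i ∈ V)
    (hB : IsUnit (Matrix.of fun k i : Fin d => f (a i.succ) k - f (a 0) k).det)
    (hp : ∀ u ∈ V, ∀ w ∈ V, ∑ k, (p u k - p w k) * (f u k - f w k) = 0) :
    ∃ S : Matrix (Fin d) (Fin d) ℝ, S + Sᵀ = 0 ∧
      ∀ v ∈ V, p v = S *ᵥ f v + (p (a 0) - S *ᵥ f (a 0)) := by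
  classical
  set g : Fin n → Fin d → ℝ := fun v => f v - f (a 0) with hg
  set q : Fin n → Fin d → ℝ := fun v => p v - p (a 0) with hq
  have rel0 : ∀ u ∈ V, ∀ w ∈ V, (q u - q w) ⬝ᵥ (g u - g w) = 0 := by
    intro u hu w hw
    rw [← hp u hu w hw]
    refine Finset.sum_congr rfl fun k _ => ?_
    simp only [hq, hg, Pi.sub_apply]
    ring
  have rel1 : ∀ v ∈ V, q v ⬝ᵥ g v = 0 := by
    intro v hv
    have := rel0 v hv (a 0) (ha 0)
    simpa [hq, hg] using this
  have rel2 : ∀ u ∈ V, ∀ w ∈ V, q u ⬝ᵥ g w + q w ⬝ᵥ g u = 0 := by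
    intro u hu w hw
    have h0 := rel0 u hu w hw
    have expand : (q u - q w) ⬝ᵥ (g u - g w) =
        q u ⬝ᵥ g u - (q u ⬝ᵥ g w + q w ⬝ᵥ g u) + q w ⬝ᵥ g w := by
      simp only [dotProduct, Pi.sub_apply, ← Finset.sum_add_distrib, ← Finset.sum_sub_distrib]
      exact Finset.sum_congr rfl fun k _ => by ring
    rw [expand] at h0
    have h1 := rel1 u hu
    have h2 := rel1 w hw
    linarith
  set B : Matrix (Fin d) (Fin d) ℝ := Matrix.of fun k i => g (a i.succ) k with hBdef
  set Q : Matrix (Fin d) (Fin d) ℝ := Matrix.of fun k i => q (a i.succ) k with hQdef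
  have hBu : IsUnit B.det := hB
  set S : Matrix (Fin d) (Fin d) ℝ := Q * B⁻¹ with hSdef
  have hSB : S * B = Q := by
    rw [hSdef, Matrix.mul_assoc, Matrix.nonsing_inv_mul _ hBu, Matrix.mul_one]
  have hgB : ∀ i : Fin d, g (a i.succ) = B *ᵥ Pi.single i 1 := by
    intro i
    funext k
    rw [mulVec_single]
    simp [hBdef]
  have hSg : ∀ i : Fin d, S *ᵥ g (a i.succ) = q (a i.succ) := by
    intro i
    rw [hgB i, mulVec_mulVec, hSB]
    funext k
    rw [mulVec_single]
    simp [hQdef]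
  have hBMB : ∀ (M : Matrix (Fin d) (Fin d) ℝ) (i j : Fin d),
      (Bᵀ * M * B) i j = g (a i.succ) ⬝ᵥ (M *ᵥ g (a j.succ)) := by
    intro M i j
    simp only [Matrix.mul_apply, Matrix.transpose_apply, dotProduct, mulVec, hBdef,
      Matrix.of_apply, Finset.sum_mul, Finset.mul_sum]
    rw [Finset.sum_comm]
    exact Finset.sum_congr rfl fun k _ => Finset.sum_congr rfl fun l _ => by ring
  have hskew : S + Sᵀ = 0 := by
    have key : Bᵀ * (S + Sᵀ) * B = 0 := by
      ext i j
      rw [hBMB]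
      rw [add_mulVec, dotProduct_add]
      have e1 : g (a i.succ) ⬝ᵥ S *ᵥ g (a j.succ) = g (a i.succ) ⬝ᵥ q (a j.succ) := by
        rw [hSg]
      have e2 : g (a i.succ) ⬝ᵥ Sᵀ *ᵥ g (a j.succ) = g (a j.succ) ⬝ᵥ q (a i.succ) := by
        rw [mulVec_transpose, dotProduct_comm, ← dotProduct_mulVec, hSg]
      rw [e1, e2]
      simp only [Matrix.zero_apply]
      have hrel := rel2 (a j.succ) (ha j.succ) (a i.succ) (ha i.succ)
      rw [dotProduct_comm (g (a i.succ)), dotProduct_comm (g (a j.succ))]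
      linarith
    have hBtu : IsUnit Bᵀ.det := by rwa [Matrix.det_transpose]
    have h2 : Bᵀ⁻¹ * (Bᵀ * (S + Sᵀ) * B) * B⁻¹ = 0 := by rw [key]; simp
    rwa [← Matrix.mul_assoc, ← Matrix.mul_assoc, Matrix.nonsing_inv_mul _ hBtu,
      Matrix.one_mul, Matrix.mul_assoc, Matrix.mul_nonsing_inv _ hBu, Matrix.mul_one] at h2
  have hST : Sᵀ = -S := eq_neg_of_add_eq_zero_right hskew
  have main : ∀ v ∈ V, q v = S *ᵥ g v := by
    intro v hv
    set w : Fin d → ℝ := q v - S *ᵥ g v with hw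
    have hwB : w ᵥ* B = 0 := by
      funext i
      have hwg : w ⬝ᵥ g (a i.succ) = 0 := by
        rw [hw, sub_dotProduct]
        have e3 : (S *ᵥ g v) ⬝ᵥ g (a i.succ) = -(q (a i.succ) ⬝ᵥ g v) := by
          rw [dotProduct_comm, dotProduct_mulVec]
          have : g (a i.succ) ᵥ* S = -(q (a i.succ)) := by
            rw [← mulVec_transpose, hST, neg_mulVec, hSg]
          rw [this, neg_dotProduct]
        rw [e3]
        have := rel2 v hv (a i.succ) (ha i.succ)
        linarith
      simp only [vecMul, dotProduct, hBdef, Matrix.of_apply, Pi.zero_apply]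
      simpa [dotProduct] using hwg
    have : w ᵥ* (B * B⁻¹) = 0 := by
      rw [← vecMul_vecMul, hwB, zero_vecMul]
    rw [Matrix.mul_nonsing_inv _ hBu, vecMul_one] at this
    rw [hw] at this
    exact sub_eq_zero.mp this
  refine ⟨S, hskew, fun v hv => ?_⟩
  have hqv := main v hv
  have : p v - p (a 0) = S *ᵥ (f v - f (a 0)) := hqv
  rw [mulVec_sub] at this
  funext k
  have h5 := congrFun this k
  simp only [Pi.sub_apply] at h5
  simp only [Pi.add_apply, Pi.sub_apply]
  linarith

lemma skew_vanish {m : ℕ} (S : Matrix (Fin (m + 1)) (Fin (m + 1)) ℝ) (hskew : S + Sᵀ = 0)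
    (u : Fin m → Fin (m + 1) → ℝ) (hu : LinearIndependent ℝ u)
    (hSu : ∀ i, S *ᵥ u i = 0) : S = 0 := by
  classical
  have hST : Sᵀ = -S := eq_neg_of_add_eq_zero_right hskew
  suffices h : ∀ x : Fin (m + 1) → ℝ, S *ᵥ x = 0 by
    ext k l
    have := congrFun (h (Pi.single l 1)) k
    rw [mulVec_single] at this
    simpa using this
  intro x
  have hker : ∀ y ∈ span ℝ (Set.range u), S *ᵥ y = 0 := by
    intro y hy
    have hle : span ℝ (Set.range u) ≤ LinearMap.ker S.mulVecLin := by
      rw [span_le]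
      rintro z ⟨i, rfl⟩
      exact LinearMap.mem_ker.mpr (by rw [mulVecLin_apply]; exact hSu i)
    have := hle hy
    rwa [LinearMap.mem_ker, mulVecLin_apply] at this
  by_cases hx : x ∈ span ℝ (Set.range u)
  · exact hker x hx
  · have hli : LinearIndependent ℝ (Fin.cons x u : Fin (m + 1) → Fin (m + 1) → ℝ) :=
      linearIndependent_fin_cons.mpr ⟨hu, hx⟩
    have htop : span ℝ (Set.range (Fin.cons x u : Fin (m + 1) → Fin (m + 1) → ℝ)) = ⊤ := by
      apply Submodule.eq_top_of_finrank_eq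
      rw [finrank_span_eq_card hli, Fintype.card_fin, Module.finrank_pi, Fintype.card_fin]
    set y := S *ᵥ x with hy
    set φ : (Fin (m + 1) → ℝ) →ₗ[ℝ] ℝ :=
      { toFun := fun z => y ⬝ᵥ z
        map_add' := fun a b => dotProduct_add _ _ _
        map_smul' := fun c a => by simp [dotProduct_smul] } with hφ
    have hφz : ∀ z, φ z = 0 := by
      intro z
      have hz : z ∈ span ℝ (Set.range (Fin.cons x u : Fin (m + 1) → Fin (m + 1) → ℝ)) := by
        rw [htop]; trivial
      have hgen : Set.range (Fin.cons x u : Fin (m + 1) → Fin (m + 1) → ℝ) ⊆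
          ↑(LinearMap.ker φ) := by
        rintro z' ⟨i, rfl⟩
        refine Fin.cases ?_ ?_ i
        · simp only [Fin.cons_zero]
          refine LinearMap.mem_ker.mpr ?_
          show y ⬝ᵥ x = 0
          rw [hy, dotProduct_comm]
          exact dot_mulVec_self_skew hskew x
        · intro j
          simp only [Fin.cons_succ]
          refine LinearMap.mem_ker.mpr ?_
          show y ⬝ᵥ u j = 0
          rw [hy, dotProduct_comm, dotProduct_mulVec, ← mulVec_transpose, hST, neg_mulVec,
            hSu j]
          simp
      have := (span_le.mpr hgen) hz
      exact LinearMap.mem_ker.mp this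
    have hyy : y ⬝ᵥ y = 0 := hφz y
    rw [dotProduct_self_eq_zero] at hyy
    exact hyy

/-- the column space -/
noncomputable def W (f : Fin n → Fin d → ℝ) (E : Finset (Fin n × Fin n)) :
    Submodule ℝ ((Fin n × Fin d) → ℝ) :=
  LinearMap.range (Matrix.mulVecLin (rigMatrix f E))

lemma W_eq_span (f : Fin n → Fin d → ℝ) (E : Finset (Fin n × Fin n)) :
    W f E = span ℝ (rcol f '' ↑E) := by
  rw [W, Matrix.range_mulVecLin,
    show (rigMatrix f E).col = fun e : {e // e ∈ E} => rcol f e.1 from rfl]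
  congr 1
  ext x
  constructor
  · rintro ⟨e, rfl⟩
    exact ⟨e.1, e.2, rfl⟩
  · rintro ⟨e, he, rfl⟩
    exact ⟨⟨e, he⟩, rfl⟩

lemma rank_eq_finrank_W (f : Fin n → Fin d → ℝ) (E : Finset (Fin n × Fin n)) :
    (rigMatrix f E).rank = finrank ℝ (W f E) := rfl

lemma W_mono (f : Fin n → Fin d → ℝ) {E E' : Finset (Fin n × Fin n)} (h : E ⊆ E') :
    W f E ≤ W f E' := by
  rw [W_eq_span, W_eq_span]
  exact span_mono (Set.image_mono (by exact_mod_cast h))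

lemma W_union (f : Fin n → Fin d → ℝ) (E1 E2 : Finset (Fin n × Fin n)) :
    W f (E1 ∪ E2) = W f E1 ⊔ W f E2 := by
  rw [W_eq_span, W_eq_span, W_eq_span, ← span_union, ← Set.image_union, Finset.coe_union]

lemma rcol_mem_W (f : Fin n → Fin d → ℝ) {E : Finset (Fin n × Fin n)} {e : Fin n × Fin n}
    (he : e ∈ E) : rcol f e ∈ W f E := by
  rw [W_eq_span]
  exact subset_span ⟨e, by simpa using he, rfl⟩

lemma completeE_mono {Vs Vs' : Finset (Fin n)} (h : Vs ⊆ Vs') :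
    completeE Vs ⊆ completeE Vs' := by
  intro e he
  simp only [completeE, Finset.mem_filter, Finset.mem_univ, true_and] at he ⊢
  exact ⟨he.1, h he.2.1, h he.2.2⟩

lemma dot_rcol (f : Fin n → Fin d → ℝ) (x : (Fin n × Fin d) → ℝ) {u v : Fin n} (huv : u ≠ v) :
    x ⬝ᵥ rcol f (u, v) = ∑ k, (x (u, k) - x (v, k)) * (f u k - f v k) := by
  classical
  rw [dotProduct, Fintype.sum_prod_type]
  rw [← Finset.sum_subset (Finset.subset_univ ({u, v} : Finset (Fin n)))]
  · rw [Finset.sum_pair huv]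
    rw [← Finset.sum_add_distrib]
    refine Finset.sum_congr rfl fun k _ => ?_
    have h1 : rcol f (u, v) (u, k) = f u k - f v k := by simp [rcol]
    have h2 : rcol f (u, v) (v, k) = f v k - f u k := by simp [rcol, Ne.symm huv]
    rw [h1, h2]
    ring
  · intro a _ ha
    simp only [Finset.mem_insert, Finset.mem_singleton] at ha
    push_neg at ha
    refine Finset.sum_eq_zero fun k _ => ?_
    simp [rcol, ha.1, ha.2]


noncomputable def affPoly (a : Fin (d + 1) → Fin n) : MvPolynomial (Fin n × Fin d) ℝ :=
  (Matrix.of fun k i : Fin d => (X (a i.succ, k) : MvPolynomial (Fin n × Fin d) ℝ)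
    - X (a 0, k)).det

lemma eval_affPoly (f : Fin n → Fin d → ℝ) (a : Fin (d + 1) → Fin n) :
    eval (cfg f) (affPoly a) =
      (Matrix.of fun k i : Fin d => f (a i.succ) k - f (a 0) k).det := by
  rw [affPoly, RingHom.map_det]
  congr 1
  ext k i
  simp [RingHom.mapMatrix_apply, cfg]

lemma affPoly_witness {a : Fin (d + 1) → Fin n} (ha : Function.Injective a) :
    ∃ f : Fin n → Fin d → ℝ, eval (cfg f) (affPoly a) ≠ 0 := by
  classical
  refine ⟨fun v k => if v = a k.succ then 1 else 0, ?_⟩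
  rw [eval_affPoly]
  have : (Matrix.of fun k i : Fin d =>
      (if a i.succ = a k.succ then (1 : ℝ) else 0) - (if a 0 = a k.succ then (1 : ℝ) else 0)) =
      (1 : Matrix (Fin d) (Fin d) ℝ) := by
    ext k i
    have h1 : (a i.succ = a k.succ) ↔ i = k := by
      rw [ha.eq_iff, Fin.succ_inj]
    have h2 : ¬(a 0 = a k.succ) := by
      rw [ha.eq_iff]
      exact (Fin.succ_ne_zero k).symm
    simp only [Matrix.of_apply]
    rw [if_neg h2, Matrix.one_apply]
    by_cases h : i = k
    · simp [h]
    · simp [h, (Ne.symm h : ¬k = i), h1]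
  rw [this, Matrix.det_one]
  exact one_ne_zero

noncomputable def interPoly {m : ℕ} (w : Fin (m + 1) → Fin n) :
    MvPolynomial (Fin n × Fin (m + 1)) ℝ :=
  (Matrix.of fun i j : Fin m => ∑ k : Fin (m + 1),
    ((X (w i.succ, k) : MvPolynomial (Fin n × Fin (m + 1)) ℝ) - X (w 0, k)) *
    ((X (w j.succ, k) : MvPolynomial (Fin n × Fin (m + 1)) ℝ) - X (w 0, k))).det

lemma eval_interPoly {m : ℕ} (f : Fin n → Fin (m + 1) → ℝ) (w : Fin (m + 1) → Fin n) :
    eval (cfg f) (interPoly w) =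
      (Matrix.of fun i j : Fin m =>
        (fun k => f (w i.succ) k - f (w 0) k) ⬝ᵥ (fun k => f (w j.succ) k - f (w 0) k)).det := by
  rw [interPoly, RingHom.map_det]
  congr 1
  ext i j
  simp [RingHom.mapMatrix_apply, cfg, dotProduct]

lemma interPoly_witness {m : ℕ} {w : Fin (m + 1) → Fin n} (hw : Function.Injective w) :
    ∃ f : Fin n → Fin (m + 1) → ℝ, eval (cfg f) (interPoly w) ≠ 0 := by
  classical
  set f : Fin n → Fin (m + 1) → ℝ := fun v k =>
    if h : (k : ℕ) < m then (if v = w (Fin.succ ⟨(k : ℕ), h⟩) then 1 else 0) else 0 with hf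
  refine ⟨f, ?_⟩
  rw [eval_interPoly]
  have hu : ∀ i : Fin m, (fun k => f (w i.succ) k - f (w 0) k) =
      fun k : Fin (m + 1) => if k = Fin.castSucc i then (1 : ℝ) else 0 := by
    intro i
    funext k
    have hw0 : f (w 0) k = 0 := by
      rw [hf]
      dsimp only
      split_ifs with h h2
      · exact absurd (hw h2) (Fin.succ_ne_zero _).symm
      · rfl
      · rfl
    rw [hw0, sub_zero, hf]
    dsimp only
    by_cases h : (k : ℕ) < m
    · rw [dif_pos h]
      by_cases hik : k = Fin.castSucc i
      · have hiv : (i : ℕ) = (k : ℕ) := by rw [hik]; simp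
        have hieq : w i.succ = w (Fin.succ ⟨(k : ℕ), h⟩) := by
          congr 2
          exact Fin.ext hiv
        rw [if_pos hieq, if_pos hik]
      · have hieq : ¬(w i.succ = w (Fin.succ ⟨(k : ℕ), h⟩)) := by
          rw [hw.eq_iff, Fin.succ_inj]
          intro hc
          apply hik
          have : (i : ℕ) = (k : ℕ) := by rw [hc]
          ext
          simp [← this]
        rw [if_neg hieq, if_neg hik]
    · rw [dif_neg h]
      have hik : ¬(k = Fin.castSucc i) := by
        intro hc
        apply h
        rw [hc]
        simpa using i.isLt
      rw [if_neg hik]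
  have hgram : (Matrix.of fun i j : Fin m =>
      (fun k => f (w i.succ) k - f (w 0) k) ⬝ᵥ (fun k => f (w j.succ) k - f (w 0) k)) =
      (1 : Matrix (Fin m) (Fin m) ℝ) := by
    ext i j
    rw [Matrix.of_apply, hu i, hu j, Matrix.one_apply]
    simp only [dotProduct, ite_mul, one_mul, zero_mul]
    rw [Finset.sum_ite_eq' Finset.univ (Fin.castSucc i)]
    simp [Fin.castSucc_inj, eq_comm]
  rw [hgram, Matrix.det_one]
  exact one_ne_zero



lemma exists_inj_of_card {V : Finset (Fin n)} {r : ℕ} (h : r ≤ V.card) :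
    ∃ a : Fin r → Fin n, Function.Injective a ∧ ∀ i, a i ∈ V := by
  obtain ⟨t, htsub, htcard⟩ := Finset.exists_subset_card_eq h
  have e : {x // x ∈ t} ≃ Fin r := Finset.equivFinOfCardEq htcard
  exact ⟨fun i => (e.symm i).1, fun i j hij => e.symm.injective (Subtype.ext hij),
    fun i => htsub (e.symm i).2⟩

lemma W_eq_of_rank {f : Fin n → Fin d → ℝ} {Vs : Finset (Fin n)} {E : Finset (Fin n × Fin n)}
    (hE : E ⊆ completeE Vs)
    (hrank : (rigMatrix f E).rank = (rigMatrix f (completeE Vs)).rank) :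
    W f E = W f (completeE Vs) :=
  Submodule.eq_of_le_of_finrank_eq (W_mono f hE)
    (by rw [← rank_eq_finrank_W, ← rank_eq_finrank_W, hrank])

lemma glue_main {m : ℕ} (f : Fin n → Fin (m + 1) → ℝ) (V1 V2 : Finset (Fin n))
    (a1 a2 : Fin (m + 2) → Fin n) (ha1 : ∀ i, a1 i ∈ V1) (ha2 : ∀ i, a2 i ∈ V2)
    (hB1 : IsUnit (Matrix.of fun k i : Fin (m + 1) => f (a1 i.succ) k - f (a1 0) k).det)
    (hB2 : IsUnit (Matrix.of fun k i : Fin (m + 1) => f (a2 i.succ) k - f (a2 0) k).det)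
    (w : Fin (m + 1) → Fin n) (hw : ∀ i, w i ∈ V1 ∩ V2)
    (hu : LinearIndependent ℝ (fun i : Fin m => fun k => f (w i.succ) k - f (w 0) k)) :
    W f (completeE (V1 ∪ V2)) ≤ W f (completeE V1) ⊔ W f (completeE V2) := by
  classical
  rw [W_eq_span f (completeE (V1 ∪ V2))]
  rw [span_le]
  rintro z ⟨e, he, rfl⟩
  obtain ⟨uu, vv⟩ := e
  rw [Finset.mem_coe] at he
  simp only [completeE, Finset.mem_filter, Finset.mem_univ, true_and] at he
  obtain ⟨hlt, hu1, hv1⟩ := he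
  apply mem_of_forall_dot
  intro x hxU
  set px : Fin n → Fin (m + 1) → ℝ := fun a k => x (a, k) with hpx
  have hsym : ∀ u v : Fin n, u ≠ v →
      (∑ k, (px u k - px v k) * (f u k - f v k)) = x ⬝ᵥ rcol f (u, v) :=
    fun u v h => (dot_rcol f x h).symm
  have hcondV : ∀ (V : Finset (Fin n)), (∀ e ∈ completeE V, x ⬝ᵥ rcol f e = 0) →
      ∀ u ∈ V, ∀ v ∈ V, ∑ k, (px u k - px v k) * (f u k - f v k) = 0 := by
    intro V hV u hu' v hv'
    rcases lt_trichotomy u v with h | h | h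
    · rw [hsym u v (ne_of_lt h)]
      refine hV (u, v) ?_
      simp only [completeE, Finset.mem_filter, Finset.mem_univ, true_and]
      exact ⟨h, hu', hv'⟩
    · subst h; simp
    · have hmem : (v, u) ∈ completeE V := by
        simp only [completeE, Finset.mem_filter, Finset.mem_univ, true_and]
        exact ⟨h, hv', hu'⟩
      have hz := hV (v, u) hmem
      rw [← hsym v u (ne_of_lt h)] at hz
      rw [← hz]
      exact Finset.sum_congr rfl fun k _ => by ring
  have hV1 : ∀ e ∈ completeE V1, x ⬝ᵥ rcol f e = 0 := fun e he =>
    hxU _ (Submodule.mem_sup_left (rcol_mem_W f he))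
  have hV2 : ∀ e ∈ completeE V2, x ⬝ᵥ rcol f e = 0 := fun e he =>
    hxU _ (Submodule.mem_sup_right (rcol_mem_W f he))
  obtain ⟨S1, hsk1, hS1⟩ := motions f px a1 ha1 hB1 (hcondV V1 hV1)
  obtain ⟨S2, hsk2, hS2⟩ := motions f px a2 ha2 hB2 (hcondV V2 hV2)
  have hwm1 : ∀ i, w i ∈ V1 := fun i => (Finset.mem_inter.mp (hw i)).1
  have hwm2 : ∀ i, w i ∈ V2 := fun i => (Finset.mem_inter.mp (hw i)).2
  have hSdiff : ∀ i : Fin m,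
      (S1 - S2) *ᵥ (fun k => f (w i.succ) k - f (w 0) k) = 0 := by
    intro i
    have e1 := hS1 (w i.succ) (hwm1 i.succ)
    have e2 := hS1 (w 0) (hwm1 0)
    have e3 := hS2 (w i.succ) (hwm2 i.succ)
    have e4 := hS2 (w 0) (hwm2 0)
    have hfun : (fun k => f (w i.succ) k - f (w 0) k) = f (w i.succ) - f (w 0) := rfl
    funext k
    rw [hfun, sub_mulVec, mulVec_sub, mulVec_sub]
    have c1 := congrFun e1 k
    have c2 := congrFun e2 k
    have c3 := congrFun e3 k
    have c4 := congrFun e4 k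
    simp only [Pi.add_apply, Pi.sub_apply, Pi.zero_apply] at c1 c2 c3 c4 ⊢
    linarith
  have hskdiff : (S1 - S2) + (S1 - S2)ᵀ = 0 := by
    rw [Matrix.transpose_sub]
    have h1 : S1ᵀ = -S1 := eq_neg_of_add_eq_zero_right hsk1
    have h2 : S2ᵀ = -S2 := eq_neg_of_add_eq_zero_right hsk2
    rw [h1, h2]
    abel
  have hS12 : S1 = S2 := sub_eq_zero.mp (skew_vanish (S1 - S2) hskdiff _ hu hSdiff)
  have ht12 : px (a1 0) - S1 *ᵥ f (a1 0) = px (a2 0) - S2 *ᵥ f (a2 0) := by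
    have e2 := hS1 (w 0) (hwm1 0)
    have e4 := hS2 (w 0) (hwm2 0)
    rw [hS12] at e2
    rw [hS12]
    funext k
    have c2 := congrFun e2 k
    have c4 := congrFun e4 k
    simp only [Pi.add_apply, Pi.sub_apply] at c2 c4 ⊢
    linarith
  have hall : ∀ v ∈ V1 ∪ V2, px v = S1 *ᵥ f v + (px (a1 0) - S1 *ᵥ f (a1 0)) := by
    intro v hv
    rcases Finset.mem_union.mp hv with h | h
    · exact hS1 v h
    · rw [ht12, hS12]
      exact hS2 v h
  have hne : uu ≠ vv := ne_of_lt hlt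
  rw [← hsym uu vv hne]
  have hpdiff : ∀ k, px uu k - px vv k = (S1 *ᵥ (f uu - f vv)) k := by
    intro k
    have eu := congrFun (hall uu hu1) k
    have ev := congrFun (hall vv hv1) k
    rw [mulVec_sub]
    simp only [Pi.add_apply, Pi.sub_apply] at eu ev ⊢
    linarith
  have : (∑ k, (px uu k - px vv k) * (f uu k - f vv k)) =
      (S1 *ᵥ (f uu - f vv)) ⬝ᵥ (f uu - f vv) := by
    refine Finset.sum_congr rfl fun k _ => ?_
    rw [hpdiff k]
    rfl
  rw [this, dotProduct_comm]
  exact dot_mulVec_self_skew hsk1 _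

end Glue

/-- Gluing Lemma: if `G₁` and `G₂` are generically `d`-rigid and share at
least `d` vertices, then `G₁ ∪ G₂` is generically `d`-rigid. -/
theorem stmt8 {n : ℕ} (d : ℕ) (V1 V2 : Finset (Fin n))
    (E1 E2 : Finset (Fin n × Fin n))
    (hE1 : E1 ⊆ completeE V1) (hE2 : E2 ⊆ completeE V2)
    (h1 : GenRigid d V1 E1) (h2 : GenRigid d V2 E2)
    (hmeet : d ≤ (V1 ∩ V2).card) :
    GenRigid d (V1 ∪ V2) (E1 ∪ E2) := by
  classical
  obtain ⟨f1, hr1, hm1⟩ := h1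
  obtain ⟨f2, hr2, hm2⟩ := h2
  rcases Nat.eq_zero_or_pos d with rfl | hdpos
  · -- trivial case d = 0
    refine ⟨fun _ _ => 0, ?_, fun g => ⟨?_, ?_⟩⟩
    · have hz : ∀ x : (Fin n × Fin 0) → ℝ, x = 0 := fun x => funext fun rc => rc.2.elim0
      ext x
      rw [hz x]
      simp
    · exact le_trans (le_trans (Matrix.rank_le_card_height _) (by simp)) (Nat.zero_le _)
    · exact le_trans (le_trans (Matrix.rank_le_card_height _) (by simp)) (Nat.zero_le _)
  obtain ⟨m, rfl⟩ : ∃ m, d = m + 1 := ⟨d - 1, by omega⟩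
  obtain ⟨f5, hm5⟩ := Glue.exists_rank_max (n := n) (d := m + 1) (E1 ∪ E2)
  obtain ⟨f6, hm6⟩ := Glue.exists_rank_max (n := n) (d := m + 1) (completeE (V1 ∪ V2))
  obtain ⟨c1, hc1⟩ := Glue.exists_gram_of_rank (f := f1) (E := E1) le_rfl
  obtain ⟨c2, hc2⟩ := Glue.exists_gram_of_rank (f := f1) (E := completeE V1) le_rfl
  obtain ⟨c3, hc3⟩ := Glue.exists_gram_of_rank (f := f2) (E := E2) le_rfl
  obtain ⟨c4, hc4⟩ := Glue.exists_gram_of_rank (f := f2) (E := completeE V2) le_rfl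
  obtain ⟨c5, hc5⟩ := Glue.exists_gram_of_rank (f := f5) (E := E1 ∪ E2) le_rfl
  obtain ⟨c6, hc6⟩ := Glue.exists_gram_of_rank (f := f6) (E := completeE (V1 ∪ V2)) le_rfl
  obtain ⟨w, hwinj, hwmem⟩ := Glue.exists_inj_of_card (r := m + 1) hmeet
  -- the rank equalities at f1, f2 coming from the GenRigid hypotheses
  have hrk1 : (rigMatrix f1 E1).rank = (rigMatrix f1 (completeE V1)).rank := by
    rw [Glue.rank_eq_finrank_W, Glue.rank_eq_finrank_W]
    exact congrArg (fun U : Submodule ℝ ((Fin n × Fin (m + 1)) → ℝ) =>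
      Module.finrank ℝ U) hr1
  have hrk2 : (rigMatrix f2 E2).rank = (rigMatrix f2 (completeE V2)).rank := by
    rw [Glue.rank_eq_finrank_W, Glue.rank_eq_finrank_W]
    exact congrArg (fun U : Submodule ℝ ((Fin n × Fin (m + 1)) → ℝ) =>
      Module.finrank ℝ U) hr2
  by_cases hnest : V1 ⊆ V2 ∨ V2 ⊆ V1
  · -- nested case
    set L : List (MvPolynomial (Fin n × Fin (m + 1)) ℝ) :=
      [Glue.gramPoly E1 _ c1, Glue.gramPoly (completeE V1) _ c2,
       Glue.gramPoly E2 _ c3, Glue.gramPoly (completeE V2) _ c4,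
       Glue.gramPoly (E1 ∪ E2) _ c5, Glue.gramPoly (completeE (V1 ∪ V2)) _ c6] with hL
    obtain ⟨x, hx⟩ := Glue.exists_common_nonvanish L (by
      intro p hp
      simp only [hL, List.mem_cons, List.not_mem_nil, or_false] at hp
      rcases hp with rfl | rfl | rfl | rfl | rfl | rfl
      exacts [⟨_, hc1⟩, ⟨_, hc2⟩, ⟨_, hc3⟩, ⟨_, hc4⟩, ⟨_, hc5⟩, ⟨_, hc6⟩])
    set F : Fin n → Fin (m + 1) → ℝ := fun v k => x (v, k) with hF
    have hcfg : Glue.cfg F = x := funext fun rc => by simp [Glue.cfg, hF]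
    have hx' : ∀ p ∈ L, MvPolynomial.eval (Glue.cfg F) p ≠ 0 := by
      rw [hcfg]; exact hx
    have hb1 := Glue.rank_ge_of_gram (hx' _ (by simp [hL] : Glue.gramPoly E1 _ c1 ∈ L))
    have hb2 := Glue.rank_ge_of_gram (hx' _ (by simp [hL] : Glue.gramPoly (completeE V1) _ c2 ∈ L))
    have hb3 := Glue.rank_ge_of_gram (hx' _ (by simp [hL] : Glue.gramPoly E2 _ c3 ∈ L))
    have hb4 := Glue.rank_ge_of_gram (hx' _ (by simp [hL] : Glue.gramPoly (completeE V2) _ c4 ∈ L))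
    have hb5 := Glue.rank_ge_of_gram (hx' _ (by simp [hL] : Glue.gramPoly (E1 ∪ E2) _ c5 ∈ L))
    have hb6 := Glue.rank_ge_of_gram
      (hx' _ (by simp [hL] : Glue.gramPoly (completeE (V1 ∪ V2)) _ c6 ∈ L))
    have hW1 : Glue.W F E1 = Glue.W F (completeE V1) := by
      apply Glue.W_eq_of_rank hE1
      have e1 : (rigMatrix F E1).rank = (rigMatrix f1 E1).rank :=
        le_antisymm ((hm1 F).2) hb1
      have e2 : (rigMatrix F (completeE V1)).rank = (rigMatrix f1 (completeE V1)).rank :=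
        le_antisymm ((hm1 F).1) hb2
      rw [e1, e2, hrk1]
    have hW2 : Glue.W F E2 = Glue.W F (completeE V2) := by
      apply Glue.W_eq_of_rank hE2
      have e1 : (rigMatrix F E2).rank = (rigMatrix f2 E2).rank :=
        le_antisymm ((hm2 F).2) hb3
      have e2 : (rigMatrix F (completeE V2)).rank = (rigMatrix f2 (completeE V2)).rank :=
        le_antisymm ((hm2 F).1) hb4
      rw [e1, e2, hrk2]
    have hle : Glue.W F (completeE (V1 ∪ V2)) ≤ Glue.W F (completeE V1) ⊔
        Glue.W F (completeE V2) := by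
      rcases hnest with h | h
      · have hun : V1 ∪ V2 = V2 := Finset.union_eq_right.mpr h
        rw [hun]
        exact le_sup_right
      · have hun : V1 ∪ V2 = V1 := Finset.union_eq_left.mpr h
        rw [hun]
        exact le_sup_left
    have hmain : Glue.W F (completeE (V1 ∪ V2)) = Glue.W F (completeE V1) ⊔
        Glue.W F (completeE V2) :=
      le_antisymm hle (sup_le (Glue.W_mono F (Glue.completeE_mono Finset.subset_union_left))
        (Glue.W_mono F (Glue.completeE_mono Finset.subset_union_right)))
    refine ⟨F, ?_, fun g => ⟨le_trans (hm6 g) hb6, le_trans (hm5 g) hb5⟩⟩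
    show Glue.W F (E1 ∪ E2) = Glue.W F (completeE (V1 ∪ V2))
    rw [Glue.W_union, hW1, hW2, hmain]
  · -- main case
    push_neg at hnest
    obtain ⟨hns1, hns2⟩ := hnest
    have hVc1 : m + 2 ≤ V1.card := by
      obtain ⟨y, hy1, hy2⟩ := Finset.not_subset.mp hns1
      have hss : V1 ∩ V2 ⊂ V1 := ⟨Finset.inter_subset_left,
        fun hsub => hy2 (Finset.mem_inter.mp (hsub hy1)).2⟩
      have := Finset.card_lt_card hss
      omega
    have hVc2 : m + 2 ≤ V2.card := by
      obtain ⟨y, hy1, hy2⟩ := Finset.not_subset.mp hns2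
      have hss : V1 ∩ V2 ⊂ V2 := ⟨Finset.inter_subset_right,
        fun hsub => hy2 (Finset.mem_inter.mp (hsub hy1)).1⟩
      have := Finset.card_lt_card hss
      omega
    obtain ⟨a1, ha1inj, ha1mem⟩ := Glue.exists_inj_of_card (r := m + 2) hVc1
    obtain ⟨a2, ha2inj, ha2mem⟩ := Glue.exists_inj_of_card (r := m + 2) hVc2
    set L : List (MvPolynomial (Fin n × Fin (m + 1)) ℝ) :=
      [Glue.gramPoly E1 _ c1, Glue.gramPoly (completeE V1) _ c2,
       Glue.gramPoly E2 _ c3, Glue.gramPoly (completeE V2) _ c4,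
       Glue.gramPoly (E1 ∪ E2) _ c5, Glue.gramPoly (completeE (V1 ∪ V2)) _ c6,
       Glue.affPoly a1, Glue.affPoly a2, Glue.interPoly w] with hL
    obtain ⟨x, hx⟩ := Glue.exists_common_nonvanish L (by
      intro p hp
      simp only [hL, List.mem_cons, List.not_mem_nil, or_false] at hp
      obtain ⟨fa1, hfa1⟩ := Glue.affPoly_witness (n := n) ha1inj
      obtain ⟨fa2, hfa2⟩ := Glue.affPoly_witness (n := n) ha2inj
      obtain ⟨fiw, hfiw⟩ := Glue.interPoly_witness (n := n) hwinj
      rcases hp with rfl | rfl | rfl | rfl | rfl | rfl | rfl | rfl | rfl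
      exacts [⟨_, hc1⟩, ⟨_, hc2⟩, ⟨_, hc3⟩, ⟨_, hc4⟩, ⟨_, hc5⟩, ⟨_, hc6⟩,
        ⟨_, hfa1⟩, ⟨_, hfa2⟩, ⟨_, hfiw⟩])
    set F : Fin n → Fin (m + 1) → ℝ := fun v k => x (v, k) with hF
    have hcfg : Glue.cfg F = x := funext fun rc => by simp [Glue.cfg, hF]
    have hx' : ∀ p ∈ L, MvPolynomial.eval (Glue.cfg F) p ≠ 0 := by
      rw [hcfg]; exact hx
    have hb1 := Glue.rank_ge_of_gram (hx' _ (by simp [hL] : Glue.gramPoly E1 _ c1 ∈ L))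
    have hb2 := Glue.rank_ge_of_gram (hx' _ (by simp [hL] : Glue.gramPoly (completeE V1) _ c2 ∈ L))
    have hb3 := Glue.rank_ge_of_gram (hx' _ (by simp [hL] : Glue.gramPoly E2 _ c3 ∈ L))
    have hb4 := Glue.rank_ge_of_gram (hx' _ (by simp [hL] : Glue.gramPoly (completeE V2) _ c4 ∈ L))
    have hb5 := Glue.rank_ge_of_gram (hx' _ (by simp [hL] : Glue.gramPoly (E1 ∪ E2) _ c5 ∈ L))
    have hb6 := Glue.rank_ge_of_gram
      (hx' _ (by simp [hL] : Glue.gramPoly (completeE (V1 ∪ V2)) _ c6 ∈ L))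
    have haff1 := hx' _ (by simp [hL] : Glue.affPoly a1 ∈ L)
    have haff2 := hx' _ (by simp [hL] : Glue.affPoly a2 ∈ L)
    have hint := hx' _ (by simp [hL] : Glue.interPoly w ∈ L)
    rw [Glue.eval_affPoly] at haff1 haff2
    rw [Glue.eval_interPoly] at hint
    have hB1 : IsUnit (Matrix.of fun k i : Fin (m + 1) =>
        F (a1 i.succ) k - F (a1 0) k).det := isUnit_iff_ne_zero.mpr haff1
    have hB2 : IsUnit (Matrix.of fun k i : Fin (m + 1) =>
        F (a2 i.succ) k - F (a2 0) k).det := isUnit_iff_ne_zero.mpr haff2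
    have hu : LinearIndependent ℝ (fun i : Fin m => fun k => F (w i.succ) k - F (w 0) k) :=
      (Glue.gram_det_ne_zero_iff _).mp hint
    have hW1 : Glue.W F E1 = Glue.W F (completeE V1) := by
      apply Glue.W_eq_of_rank hE1
      have e1 : (rigMatrix F E1).rank = (rigMatrix f1 E1).rank :=
        le_antisymm ((hm1 F).2) hb1
      have e2 : (rigMatrix F (completeE V1)).rank = (rigMatrix f1 (completeE V1)).rank :=
        le_antisymm ((hm1 F).1) hb2
      rw [e1, e2, hrk1]
    have hW2 : Glue.W F E2 = Glue.W F (completeE V2) := by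
      apply Glue.W_eq_of_rank hE2
      have e1 : (rigMatrix F E2).rank = (rigMatrix f2 E2).rank :=
        le_antisymm ((hm2 F).2) hb3
      have e2 : (rigMatrix F (completeE V2)).rank = (rigMatrix f2 (completeE V2)).rank :=
        le_antisymm ((hm2 F).1) hb4
      rw [e1, e2, hrk2]
    have hle := Glue.glue_main F V1 V2 a1 a2 ha1mem ha2mem hB1 hB2 w hwmem hu
    have hmain : Glue.W F (completeE (V1 ∪ V2)) = Glue.W F (completeE V1) ⊔
        Glue.W F (completeE V2) :=
      le_antisymm hle (sup_le (Glue.W_mono F (Glue.completeE_mono Finset.subset_union_left))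
        (Glue.W_mono F (Glue.completeE_mono Finset.subset_union_right)))
    refine ⟨F, ?_, fun g => ⟨le_trans (hm6 g) hb6, le_trans (hm5 g) hb5⟩⟩
    show Glue.W F (E1 ∪ E2) = Glue.W F (completeE (V1 ∪ V2))
    rw [Glue.W_union, hW1, hW2, hmain]
end

section
/- Let P be a prime simplicial d-polytope (d ≥ 4) and let P' be obtained from P by a stellar subdivision at a ridge F (a (d-2)-dimensional face). Then g_2(∂P') = g_2(∂P) + 1 and f_0(∂P') = f_0(∂P) + 1, and P' is again prime. -/
open scoped BigOperators

noncomputable instance euclidDecEq (d : ℕ) : DecidableEq (EuclideanSpace ℝ (Fin d)) :=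
  Classical.decEq _

variable {V : Type} [DecidableEq V]

/-- `F` is (the vertex set of) a face of the polytope `conv P`: it is cut out of `P` by
a supporting linear functional. (The empty set is a face, via `φ = 0`, `c = 1`.) -/
def IsFaceOf {d : ℕ} (P : Finset (EuclideanSpace ℝ (Fin d)))
    (F : Finset (EuclideanSpace ℝ (Fin d))) : Prop :=
  F ⊆ P ∧ ∃ (φ : EuclideanSpace ℝ (Fin d) →ₗ[ℝ] ℝ) (c : ℝ),
    (∀ v ∈ P, φ v ≤ c) ∧ ∀ v ∈ P, (φ v = c ↔ v ∈ F)

/-- `K` is the boundary complex of the simplicial `d`-polytope with vertex set `P`: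
`P` affinely spans `ℝ^d`, every point of `P` is a vertex, `K` consists of the vertex
sets of the proper faces, and all of these are affinely independent (simpliciality). -/
def IsSimplicialPolytopeBoundary (d : ℕ) (P : Finset (EuclideanSpace ℝ (Fin d)))
    (K : Set (Finset (EuclideanSpace ℝ (Fin d)))) : Prop :=
  affineSpan ℝ (P : Set (EuclideanSpace ℝ (Fin d))) = ⊤ ∧
  (∀ v ∈ P, IsFaceOf P {v}) ∧
  (∀ F : Finset (EuclideanSpace ℝ (Fin d)), F ∈ K ↔ IsFaceOf P F ∧ F ≠ P) ∧
  ∀ F ∈ K, AffineIndependent ℝ (fun x : F => (x : EuclideanSpace ℝ (Fin d)))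


/-- An affinely independent finite set on which a nonzero linear functional is constant
has at most `d` points in `ℝ^d`. -/
lemma card_le_of_functional {d : ℕ} (S : Finset (EuclideanSpace ℝ (Fin d)))
    (hind : AffineIndependent ℝ (fun x : S => (x : EuclideanSpace ℝ (Fin d))))
    (φ : EuclideanSpace ℝ (Fin d) →ₗ[ℝ] ℝ) (hφ : φ ≠ 0) (c : ℝ)
    (hvan : ∀ x ∈ S, φ x = c) : S.card ≤ d := by
  by_contra h
  push_neg at h
  have hcard : Fintype.card S = (S.card - 1) + 1 := by
    rw [Fintype.card_coe]; omega
  have hfr := hind.finrank_vectorSpan hcard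
  have hrange : Set.range (fun x : S => (x : EuclideanSpace ℝ (Fin d))) = (S : Set _) := by
    ext x; simp
  rw [hrange] at hfr
  have hle : vectorSpan ℝ (S : Set (EuclideanSpace ℝ (Fin d))) ≤ LinearMap.ker φ := by
    rw [vectorSpan_def, Submodule.span_le]
    rintro x ⟨a, ha, b, hb, rfl⟩
    simp only [SetLike.mem_coe, LinearMap.mem_ker, vsub_eq_sub, map_sub]
    rw [hvan a ha, hvan b hb, sub_self]
  -- finrank of ker φ is d - 1
  have hsurj : Function.Surjective φ := by
    obtain ⟨x, hx⟩ : ∃ x, φ x ≠ 0 := by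
      by_contra hall; push_neg at hall
      exact hφ (LinearMap.ext fun x => by simp [hall x])
    intro y
    exact ⟨(y / φ x) • x, by simp [div_mul_cancel₀, hx]⟩
  have hrk := LinearMap.finrank_range_add_finrank_ker φ
  rw [LinearMap.range_eq_top.mpr hsurj, finrank_top, Module.finrank_self,
    finrank_euclideanSpace_fin] at hrk
  have hmono := Submodule.finrank_mono hle
  omega

open Module Submodule in
set_option maxHeartbeats 4000000 in
lemma link_struct {d : ℕ} (hd : 4 ≤ d) (P : Finset (EuclideanSpace ℝ (Fin d)))
    (K : Set (Finset (EuclideanSpace ℝ (Fin d))))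
    (hP : IsSimplicialPolytopeBoundary d P K)
    (F : Finset (EuclideanSpace ℝ (Fin d))) (hF : F ∈ K) (hcard : F.card = d - 1) :
    ∃ a b : EuclideanSpace ℝ (Fin d), a ≠ b ∧ a ∈ P ∧ b ∈ P ∧ a ∉ F ∧ b ∉ F ∧
      ∀ v, ({v} : Finset (EuclideanSpace ℝ (Fin d))) ∈ link K F ↔ v = a ∨ v = b := by
  obtain ⟨hspan, hvert, hKiff, hindep⟩ := hP
  obtain ⟨⟨hFP, ψ0, c, hle0, heq0⟩, hFne⟩ := (hKiff F).mp hF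
  obtain ⟨f0, hf0⟩ : F.Nonempty := Finset.card_pos.mp (by omega)
  have hc0 : ψ0 f0 = c := (heq0 f0 (hFP hf0)).mpr hf0
  obtain ⟨u0, hu0P, hu0F⟩ :=
    Finset.exists_of_ssubset (Finset.ssubset_iff_subset_ne.mpr ⟨hFP, hFne⟩)
  have hψ0ne : ψ0 ≠ 0 := by
    intro h
    have hc : c = 0 := by rw [← hc0, h]; simp
    exact hu0F ((heq0 u0 hu0P).mp (by rw [h, hc]; simp))
  have hneg : ∀ u ∈ P, u ∉ F → ψ0 (u - f0) < 0 := by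
    intro u hu huF
    have h1 : ψ0 u ≤ c := hle0 u hu
    have h2 : ψ0 u ≠ c := fun h => huF ((heq0 u hu).mp h)
    rw [map_sub, hc0]
    have := lt_of_le_of_ne h1 h2
    linarith
  set U := vectorSpan ℝ (F : Set (EuclideanSpace ℝ (Fin d))) with hUdef
  have hAket : ∀ (φ : EuclideanSpace ℝ (Fin d) →ₗ[ℝ] ℝ), (∀ x ∈ F, ∀ y ∈ F, φ x = φ y) →
      φ ∈ U.dualAnnihilator := by
    intro φ hφ
    rw [Submodule.mem_dualAnnihilator]
    intro wv hwv
    rw [hUdef, vectorSpan_def] at hwv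
    have hsub : ((F : Set (EuclideanSpace ℝ (Fin d))) -ᵥ (F : Set _)) ⊆
        (LinearMap.ker φ : Set _) := by
      rintro x ⟨p, hp, q, hq, rfl⟩
      simp only [SetLike.mem_coe, LinearMap.mem_ker, vsub_eq_sub, map_sub]
      rw [hφ p hp q hq, sub_self]
    exact Submodule.span_le.mpr hsub hwv
  have hA1 : ∀ φ ∈ U.dualAnnihilator, ∀ x ∈ F, φ ((x : EuclideanSpace ℝ (Fin d)) - f0) = 0 := by
    intro φ hφ x hx
    rw [Submodule.mem_dualAnnihilator] at hφ
    refine hφ _ ?_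
    rw [hUdef]
    have := vsub_mem_vectorSpan ℝ (Finset.mem_coe.mpr hx) (Finset.mem_coe.mpr hf0)
    rwa [vsub_eq_sub] at this
  have hψ0A : ψ0 ∈ U.dualAnnihilator := hAket ψ0 (fun x hx y hy => by
    rw [(heq0 x (hFP hx)).mpr hx, (heq0 y (hFP hy)).mpr hy])
  have hU2 : finrank ℝ U = d - 2 := by
    have hi := hindep F hF
    have hrange : Set.range (fun x : F => (x : EuclideanSpace ℝ (Fin d))) = (F : Set _) := by
      ext x; simp
    have hcardF : Fintype.card F = (d - 3 + 1) + 1 := by rw [Fintype.card_coe]; omega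
    have hfr := hi.finrank_vectorSpan hcardF
    rw [hrange] at hfr
    rw [hUdef, hfr]; omega
  have hA2 : finrank ℝ U.dualAnnihilator = 2 := by
    have h1 := Submodule.finrank_quotient_add_finrank U
    have h2 : finrank ℝ (EuclideanSpace ℝ (Fin d) ⧸ U) = finrank ℝ U.dualAnnihilator :=
      (Subspace.quotEquivAnnihilator U).finrank_eq
    rw [finrank_euclideanSpace_fin] at h1
    omega
  have hsingle_lt : Submodule.span ℝ ({ψ0} : Set (Module.Dual ℝ (EuclideanSpace ℝ (Fin d)))) < U.dualAnnihilator := by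
    refine lt_of_le_of_ne ?_ ?_
    · rw [Submodule.span_le, Set.singleton_subset_iff]; exact hψ0A
    · intro h
      have hfr : finrank ℝ (Submodule.span ℝ ({ψ0} : Set (Module.Dual ℝ (EuclideanSpace ℝ (Fin d))))) = 1 :=
        finrank_span_singleton hψ0ne
      rw [h, hA2] at hfr; omega
  obtain ⟨ψ1, hψ1A, hψ1ns⟩ := SetLike.exists_of_lt hsingle_lt
  have hpair : Submodule.span ℝ ({ψ0, ψ1} : Set (Module.Dual ℝ (EuclideanSpace ℝ (Fin d)))) = U.dualAnnihilator := by
    apply Submodule.eq_of_le_of_finrank_le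
    · rw [Submodule.span_le]
      intro x hx
      rcases Set.mem_insert_iff.mp hx with rfl | hx
      · exact hψ0A
      · rw [Set.mem_singleton_iff] at hx; subst hx; exact hψ1A
    · have hlt : Submodule.span ℝ ({ψ0} : Set (Module.Dual ℝ (EuclideanSpace ℝ (Fin d)))) < Submodule.span ℝ ({ψ0, ψ1} : Set (Module.Dual ℝ (EuclideanSpace ℝ (Fin d)))) := by
        refine lt_of_le_of_ne (Submodule.span_mono (by simp)) ?_
        intro h
        exact hψ1ns (h ▸ Submodule.subset_span (by simp))
      have h2 := Submodule.finrank_lt_finrank_of_lt hlt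
      have h1 : finrank ℝ (Submodule.span ℝ ({ψ0} : Set (Module.Dual ℝ (EuclideanSpace ℝ (Fin d))))) = 1 :=
        finrank_span_singleton hψ0ne
      rw [hA2]; omega
  have hdecomp : ∀ φ ∈ U.dualAnnihilator, ∃ s t : ℝ, s • ψ0 + t • ψ1 = φ := by
    intro φ hφ
    rw [← hpair] at hφ
    exact Submodule.mem_span_pair.mp hφ
  set τ : EuclideanSpace ℝ (Fin d) → ℝ := fun u => ψ1 (u - f0) / (-(ψ0 (u - f0))) with hτdef
  have hpos : ∀ u ∈ P \ F, 0 < -(ψ0 (u - f0)) := by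
    intro u hu
    rw [Finset.mem_sdiff] at hu
    have := hneg u hu.1 hu.2; linarith
  have hτm : ∀ u ∈ P \ F, ψ1 (u - f0) = τ u * (-(ψ0 (u - f0))) :=
    fun u hu => (div_mul_cancel₀ _ (ne_of_gt (hpos u hu))).symm
  have hval : ∀ (s t : ℝ) (u : EuclideanSpace ℝ (Fin d)), u ∈ P \ F →
      (s • ψ0 + t • ψ1) (u - f0) = (-(ψ0 (u - f0))) * (t * τ u - s) := by
    intro s t u hu
    simp only [LinearMap.add_apply, LinearMap.smul_apply, smul_eq_mul]
    rw [hτm u hu]; ring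
  have hvalF : ∀ (s t : ℝ) (x : EuclideanSpace ℝ (Fin d)), x ∈ F →
      (s • ψ0 + t • ψ1) (x - f0) = 0 := by
    intro s t x hx
    simp only [LinearMap.add_apply, LinearMap.smul_apply, smul_eq_mul]
    rw [hA1 ψ0 hψ0A x hx, hA1 ψ1 hψ1A x hx]; ring
  have hPo : (P \ F).Nonempty := ⟨u0, Finset.mem_sdiff.mpr ⟨hu0P, hu0F⟩⟩
  obtain ⟨vm, hvm, hvmmin⟩ := Finset.exists_min_image (P \ F) τ hPo
  obtain ⟨vM, hvM, hvMmax⟩ := Finset.exists_max_image (P \ F) τ hPo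
  have hvmP : vm ∈ P := (Finset.mem_sdiff.mp hvm).1
  have hvmF : vm ∉ F := (Finset.mem_sdiff.mp hvm).2
  have hvMP : vM ∈ P := (Finset.mem_sdiff.mp hvM).1
  have hvMF : vM ∉ F := (Finset.mem_sdiff.mp hvM).2
  have hmM : τ vm < τ vM := by
    rcases lt_or_ge (τ vm) (τ vM) with h | h
    · exact h
    · exfalso
      have hconst : ∀ u ∈ P \ F, τ u = τ vm :=
        fun u hu => le_antisymm (le_trans (hvMmax u hu) h) (hvmmin u hu)
      have hχ : ∀ v ∈ P, ((τ vm) • ψ0 + (1 : ℝ) • ψ1) (v - f0) = 0 := by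
        intro v hv
        by_cases hvF : v ∈ F
        · exact hvalF _ _ v hvF
        · have hv' : v ∈ P \ F := Finset.mem_sdiff.mpr ⟨hv, hvF⟩
          rw [hval _ _ v hv', hconst v hv']; ring
      have hχ0 : (τ vm) • ψ0 + (1 : ℝ) • ψ1 = 0 := by
        have hsp : vectorSpan ℝ (P : Set (EuclideanSpace ℝ (Fin d))) = ⊤ := by
          rw [← direction_affineSpan, hspan]
          exact AffineSubspace.direction_top ℝ _ _
        have hker : vectorSpan ℝ (P : Set (EuclideanSpace ℝ (Fin d))) ≤
            LinearMap.ker ((τ vm) • ψ0 + (1 : ℝ) • ψ1) := by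
          rw [vectorSpan_def, Submodule.span_le]
          rintro x ⟨p, hp, q, hq, rfl⟩
          simp only [SetLike.mem_coe, LinearMap.mem_ker, vsub_eq_sub]
          have heq : ((τ vm) • ψ0 + (1 : ℝ) • ψ1) (p - q) =
              ((τ vm) • ψ0 + (1 : ℝ) • ψ1) (p - f0) -
              ((τ vm) • ψ0 + (1 : ℝ) • ψ1) (q - f0) := by
            rw [← map_sub]; congr 1; abel
          rw [heq, hχ p hp, hχ q hq, sub_self]
        rw [hsp, top_le_iff] at hker
        exact LinearMap.ker_eq_top.mp hker
      apply hψ1ns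
      rw [Submodule.mem_span_singleton]
      refine ⟨-(τ vm), ?_⟩
      have h2 : ψ1 = -((τ vm) • ψ0) := by
        rw [one_smul] at hχ0
        rw [← zero_sub, ← hχ0]; abel
      rw [h2, neg_smul]
  have hface : ∀ (b t : ℝ), b ≠ 0 → (∀ u ∈ P \ F, b * (τ u - t) ≤ 0) →
      (∃ z, z ∈ P \ F ∧ τ z ≠ t) →
      (F ∪ (P \ F).filter (fun u => τ u = t)) ∈ K := by
    intro b t hb hmono hex
    obtain ⟨z, hz, hzt⟩ := hex
    have hval' : ∀ u ∈ P \ F, ((b * t) • ψ0 + b • ψ1) (u - f0) =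
        (-(ψ0 (u - f0))) * (b * (τ u - t)) := by
      intro u hu
      rw [hval (b*t) b u hu]; ring
    have hdiff : ∀ v : EuclideanSpace ℝ (Fin d),
        ((b * t) • ψ0 + b • ψ1) v - ((b * t) • ψ0 + b • ψ1) f0 =
        ((b * t) • ψ0 + b • ψ1) (v - f0) := by
      intro v; rw [map_sub]
    apply (hKiff _).mpr
    constructor
    · refine ⟨?_, (b * t) • ψ0 + b • ψ1, ((b * t) • ψ0 + b • ψ1) f0, ?_, ?_⟩
      · intro x hx
        rcases Finset.mem_union.mp hx with h | h
        · exact hFP h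
        · exact (Finset.mem_sdiff.mp (Finset.mem_filter.mp h).1).1
      · intro v hv
        by_cases hvF : v ∈ F
        · have h0 := hvalF (b*t) b v hvF
          rw [← hdiff v] at h0; linarith
        · have hv' : v ∈ P \ F := Finset.mem_sdiff.mpr ⟨hv, hvF⟩
          have h0 := hval' v hv'
          rw [← hdiff v] at h0
          have hp := hpos v hv'
          have hm := hmono v hv'
          nlinarith
      · intro v hv
        constructor
        · intro hveq
          by_cases hvF : v ∈ F
          · exact Finset.mem_union_left _ hvF
          · have hv' : v ∈ P \ F := Finset.mem_sdiff.mpr ⟨hv, hvF⟩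
            have h0 := hval' v hv'
            rw [← hdiff v, hveq, sub_self] at h0
            have hp := hpos v hv'
            have hbt : b * (τ v - t) = 0 := by
              rcases mul_eq_zero.mp h0.symm with h | h
              · linarith
              · exact h
            have : τ v = t := by
              rcases mul_eq_zero.mp hbt with h | h
              · exact absurd h hb
              · linarith
            exact Finset.mem_union_right _ (Finset.mem_filter.mpr ⟨hv', this⟩)
        · intro hvmem
          rcases Finset.mem_union.mp hvmem with h | h
          · have h0 := hvalF (b*t) b v h
            rw [← hdiff v] at h0; linarith
          · obtain ⟨hv', hτv⟩ := Finset.mem_filter.mp h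
            have h0 := hval' v hv'
            rw [← hdiff v, hτv] at h0
            have : (-(ψ0 (v - f0))) * (b * (t - t)) = 0 := by ring
            rw [this] at h0
            linarith
    · intro hEP
      have hzP : z ∈ P := (Finset.mem_sdiff.mp hz).1
      rw [← hEP] at hzP
      rcases Finset.mem_union.mp hzP with h | h
      · exact (Finset.mem_sdiff.mp hz).2 h
      · exact hzt (Finset.mem_filter.mp h).2
  have huniq : ∀ (b t : ℝ), b ≠ 0 → (∀ u ∈ P \ F, b * (τ u - t) ≤ 0) →
      (∃ z, z ∈ P \ F ∧ τ z ≠ t) →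
      ∀ u, u ∈ P \ F → ∀ u', u' ∈ P \ F → τ u = t → τ u' = t → u = u' := by
    intro b t hb hmono hex u hu u' hu' htu htu'
    by_contra hne
    have hEK := hface b t hb hmono hex
    have hindE := hindep _ hEK
    have huF : u ∉ F := (Finset.mem_sdiff.mp hu).2
    have hu'F : u' ∉ F := (Finset.mem_sdiff.mp hu').2
    have hsubE : insert u (insert u' F) ⊆ F ∪ (P \ F).filter (fun x => τ x = t) := by
      intro x hx
      rcases Finset.mem_insert.mp hx with rfl | hx
      · exact Finset.mem_union_right _ (Finset.mem_filter.mpr ⟨hu, htu⟩)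
      rcases Finset.mem_insert.mp hx with rfl | hx
      · exact Finset.mem_union_right _ (Finset.mem_filter.mpr ⟨hu', htu'⟩)
      · exact Finset.mem_union_left _ hx
    have hindE' : AffineIndependent ℝ
        (fun x : (insert u (insert u' F) : Finset (EuclideanSpace ℝ (Fin d))) =>
          (x : EuclideanSpace ℝ (Fin d))) := by
      exact hindE.comp_embedding
        ⟨fun x => ⟨x.1, hsubE x.2⟩, fun x y hxy => Subtype.ext (Subtype.mk_eq_mk.mp hxy)⟩
    have hφne : ((b * t) • ψ0 + b • ψ1) ≠ 0 := by
      intro h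
      apply hψ1ns
      rw [Submodule.mem_span_singleton]
      refine ⟨-t, ?_⟩
      ext x
      have h1 := LinearMap.ext_iff.mp h x
      simp only [LinearMap.add_apply, LinearMap.smul_apply, smul_eq_mul,
        LinearMap.zero_apply, LinearMap.neg_apply] at h1 ⊢
      have h2 : b * (t * ψ0 x + ψ1 x) = 0 := by ring_nf; ring_nf at h1; linarith
      have h3 := (mul_eq_zero.mp h2).resolve_left hb
      linarith
    have hvanE' : ∀ x ∈ insert u (insert u' F), ((b * t) • ψ0 + b • ψ1) x =
        ((b * t) • ψ0 + b • ψ1) f0 := by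
      intro x hx
      have key : ((b * t) • ψ0 + b • ψ1) (x - f0) = 0 := by
        rcases Finset.mem_insert.mp hx with rfl | hx
        · rw [hval (b*t) b x hu, htu]; ring
        · rcases Finset.mem_insert.mp hx with rfl | hx
          · rw [hval (b*t) b x hu', htu']; ring
          · exact hvalF _ _ x hx
      rw [map_sub] at key; linarith
    have hcontra := card_le_of_functional _ hindE' _ hφne _ hvanE'
    have huu' : u ∉ insert u' F := by
      intro h
      rcases Finset.mem_insert.mp h with h | h
      · exact hne h
      · exact huF h
    rw [Finset.card_insert_of_notMem huu', Finset.card_insert_of_notMem hu'F] at hcontra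
    omega
  have hvmM : vm ≠ vM := fun h => absurd (h ▸ hmM) (lt_irrefl _)
  have hmono_min : ∀ u ∈ P \ F, (-1 : ℝ) * (τ u - τ vm) ≤ 0 := by
    intro u hu; have := hvmmin u hu; linarith
  have hex_min : ∃ z, z ∈ P \ F ∧ τ z ≠ τ vm := ⟨vM, hvM, ne_of_gt hmM⟩
  have hmono_max : ∀ u ∈ P \ F, (1 : ℝ) * (τ u - τ vM) ≤ 0 := by
    intro u hu; have := hvMmax u hu; linarith
  have hex_max : ∃ z, z ∈ P \ F ∧ τ z ≠ τ vM := ⟨vm, hvm, ne_of_lt hmM⟩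
  have hfilter_min : (P \ F).filter (fun u => τ u = τ vm) = {vm} := by
    ext x
    simp only [Finset.mem_filter, Finset.mem_singleton]
    constructor
    · rintro ⟨hx, hτx⟩
      exact huniq (-1) (τ vm) (by norm_num) hmono_min hex_min x hx vm hvm hτx rfl
    · rintro rfl; exact ⟨hvm, rfl⟩
  have hfilter_max : (P \ F).filter (fun u => τ u = τ vM) = {vM} := by
    ext x
    simp only [Finset.mem_filter, Finset.mem_singleton]
    constructor
    · rintro ⟨hx, hτx⟩
      exact huniq 1 (τ vM) one_ne_zero hmono_max hex_max x hx vM hvM hτx rfl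
    · rintro rfl; exact ⟨hvM, rfl⟩
  have hKm : ({vm} ∪ F : Finset (EuclideanSpace ℝ (Fin d))) ∈ K := by
    have h := hface (-1) (τ vm) (by norm_num) hmono_min hex_min
    rw [hfilter_min, Finset.union_comm] at h
    exact h
  have hKM : ({vM} ∪ F : Finset (EuclideanSpace ℝ (Fin d))) ∈ K := by
    have h := hface 1 (τ vM) one_ne_zero hmono_max hex_max
    rw [hfilter_max, Finset.union_comm] at h
    exact h
  refine ⟨vm, vM, hvmM, hvmP, hvMP, hvmF, hvMF, ?_⟩
  intro v
  constructor
  · rintro ⟨hvint, hvK⟩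
    obtain ⟨⟨hsubP, φ, cv, hlev, heqv⟩, hneP⟩ := (hKiff _).mp hvK
    have hvF : v ∉ F := by
      intro h
      have hmem : v ∈ ({v} : Finset (EuclideanSpace ℝ (Fin d))) ∩ F :=
        Finset.mem_inter.mpr ⟨Finset.mem_singleton_self v, h⟩
      rw [hvint] at hmem
      exact Finset.notMem_empty v hmem
    have hvP : v ∈ P := hsubP (Finset.mem_union_left _ (Finset.mem_singleton_self v))
    have hvPo : v ∈ P \ F := Finset.mem_sdiff.mpr ⟨hvP, hvF⟩
    have hφA : φ ∈ U.dualAnnihilator := hAket φ (by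
      intro x hx y hy
      rw [(heqv x (hsubP (Finset.mem_union_right _ hx))).mpr (Finset.mem_union_right _ hx),
          (heqv y (hsubP (Finset.mem_union_right _ hy))).mpr (Finset.mem_union_right _ hy)])
    obtain ⟨s, t, hst⟩ := hdecomp φ hφA
    have hf0cv : φ f0 = cv :=
      (heqv f0 (hsubP (Finset.mem_union_right _ hf0))).mpr (Finset.mem_union_right _ hf0)
    have hvcv : φ v = cv := (heqv v hvP).mpr (Finset.mem_union_left _ (Finset.mem_singleton_self v))
    have hkey : ∀ u ∈ P \ F, (-(ψ0 (u - f0))) * (t * τ u - s) = φ u - cv := by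
      intro u hu
      rw [← hval s t u hu, hst, map_sub, hf0cv]
    have hveq : t * τ v - s = 0 := by
      have h1 := hkey v hvPo
      rw [hvcv, sub_self] at h1
      have hp := hpos v hvPo
      rcases mul_eq_zero.mp h1 with h | h
      · linarith
      · exact h
    have hle' : ∀ u ∈ P \ F, t * (τ u - τ v) ≤ 0 := by
      intro u hu
      have h1 := hkey u hu
      have h2 : φ u - cv ≤ 0 := by
        have := hlev u (Finset.mem_sdiff.mp hu).1; linarith
      have hp := hpos u hu
      nlinarith [hveq]
    have hstrict : ∀ u, u ∈ P \ F → u ≠ v → t * (τ u - τ v) < 0 := by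
      intro u hu hune
      have h1 := hkey u hu
      have huP := (Finset.mem_sdiff.mp hu).1
      have h2 : φ u ≠ cv := by
        intro h
        have hm := (heqv u huP).mp h
        rcases Finset.mem_union.mp hm with h' | h'
        · exact hune (Finset.mem_singleton.mp h')
        · exact (Finset.mem_sdiff.mp hu).2 h'
      have h3 : φ u - cv < 0 := by
        have := hlev u huP
        rcases lt_or_eq_of_le this with h' | h'
        · linarith
        · exact absurd h' h2
      have hp := hpos u hu
      nlinarith [hveq]
    have htne : t ≠ 0 := by
      intro h0
      by_cases hvvm : v = vm
      · have hs := hstrict vM hvM (by rw [hvvm]; exact fun hh => hvmM hh.symm)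
        rw [h0] at hs; simp at hs
      · have hs := hstrict vm hvm (fun hh => hvvm hh.symm)
        rw [h0] at hs; simp at hs
    rcases lt_or_gt_of_ne htne with ht | ht
    · left
      have hτvm : τ v = τ vm := by
        have h1 : ∀ u ∈ P \ F, τ v ≤ τ u := by
          intro u hu
          have := hle' u hu
          nlinarith
        exact le_antisymm (h1 vm hvm) (hvmmin v hvPo)
      exact huniq (-1) (τ vm) (by norm_num) hmono_min hex_min v hvPo vm hvm hτvm rfl
    · right
      have hτvM : τ v = τ vM := by
        have h1 : ∀ u ∈ P \ F, τ u ≤ τ v := by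
          intro u hu; have := hle' u hu; nlinarith
        exact le_antisymm (hvMmax v hvPo) (h1 vM hvM)
      exact huniq 1 (τ vM) one_ne_zero hmono_max hex_max v hvPo vM hvM hτvM rfl
  · rintro (rfl | rfl)
    · exact ⟨Finset.singleton_inter_of_notMem hvmF, hKm⟩
    · exact ⟨Finset.singleton_inter_of_notMem hvMF, hKM⟩

set_option maxHeartbeats 1000000 in
/-- stellar subdivision at a ridge `F` of (the boundary complex of) a
prime simplicial `d`-polytope increases `g₂` by one, increases the number of vertices by
one, and preserves primality. -/
theorem stmt14 (d : ℕ) (hd : 4 ≤ d) (P : Finset (EuclideanSpace ℝ (Fin d)))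
    (K : Set (Finset (EuclideanSpace ℝ (Fin d))))
    (hP : IsSimplicialPolytopeBoundary d P K) (hprime : IsPrime d K)
    (F : Finset (EuclideanSpace ℝ (Fin d))) (hF : F ∈ K) (hcard : F.card = d - 1)
    (w : EuclideanSpace ℝ (Fin d)) (hw : w ∉ verts K) :
    g2 d (stellarSub K F w) = g2 d K + 1 ∧
    fcount (stellarSub K F w) 0 = fcount K 0 + 1 ∧
    IsPrime d (stellarSub K F w) := by
  obtain ⟨va, vb, hab, haP, hbP, haF, hbF, hlk⟩ := link_struct hd P K hP F hF hcard
  obtain ⟨hspan, hvert, hKiff, hindep⟩ := hP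
  have hKP : ∀ T ∈ K, T ⊆ P := fun T hT => ((hKiff T).mp hT).1.1
  have hPK : ∀ v ∈ P, ({v} : Finset (EuclideanSpace ℝ (Fin d))) ∈ K := by
    intro v hv
    refine (hKiff _).mpr ⟨hvert v hv, ?_⟩
    intro h
    have h1 : affineSpan ℝ (({v} : Finset (EuclideanSpace ℝ (Fin d))) :
        Set (EuclideanSpace ℝ (Fin d))) = ⊤ := by
      rw [h]; exact hspan
    have h2 : vectorSpan ℝ (({v} : Finset (EuclideanSpace ℝ (Fin d))) :
        Set (EuclideanSpace ℝ (Fin d))) = ⊤ := by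
      have hda := direction_affineSpan ℝ (({v} : Finset (EuclideanSpace ℝ (Fin d))) :
        Set (EuclideanSpace ℝ (Fin d)))
      rw [h1, AffineSubspace.direction_top] at hda
      exact hda.symm
    rw [Finset.coe_singleton, vectorSpan_singleton] at h2
    have h3 : Module.finrank ℝ (⊥ : Submodule ℝ (EuclideanSpace ℝ (Fin d))) =
        Module.finrank ℝ (⊤ : Submodule ℝ (EuclideanSpace ℝ (Fin d))) := by rw [h2]
    rw [finrank_bot, finrank_top, finrank_euclideanSpace_fin] at h3
    omega
  have hwP : w ∉ P := fun h => hw (hPK w h)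
  have hFsubP : F ⊆ P := hKP F hF
  have haK : ({va} ∪ F : Finset (EuclideanSpace ℝ (Fin d))) ∈ K := ((hlk va).mpr (Or.inl rfl)).2
  have hbK : ({vb} ∪ F : Finset (EuclideanSpace ℝ (Fin d))) ∈ K := ((hlk vb).mpr (Or.inr rfl)).2
  have hKcard : ∀ T ∈ K, T.card ≤ d := by
    intro T hT
    obtain ⟨⟨hTP, φ, c, hle, heq⟩, hTne⟩ := (hKiff T).mp hT
    rcases T.eq_empty_or_nonempty with rfl | ⟨t0, ht0⟩
    · simp
    by_cases hφ : φ = 0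
    · exfalso
      apply hTne
      apply Finset.Subset.antisymm hTP
      intro v hv
      have hc : c = 0 := by rw [← (heq t0 (hTP ht0)).mpr ht0, hφ]; simp
      exact (heq v hv).mp (by rw [hφ, hc]; simp)
    · exact card_le_of_functional T (hindep T hT) φ hφ c (fun x hx => (heq x (hTP hx)).mpr hx)
  have hFne : F.Nonempty := Finset.card_pos.mp (by omega)
  have hwK' : ({w} : Finset (EuclideanSpace ℝ (Fin d))) ∈ stellarSub K F w := by
    refine Or.inr ⟨∅, ∅, Finset.empty_ssubset.mpr hFne, ⟨by simp, by simpa using hF⟩, by simp⟩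
  have hABsub : ∀ A B : Finset (EuclideanSpace ℝ (Fin d)), A ⊂ F → B ∈ link K F →
      A ∪ B ⊆ P ∧ w ∉ A ∪ B := by
    intro A B hA hB
    obtain ⟨hBint, hBK⟩ := hB
    have hAP : A ⊆ P := fun x hx => hFsubP (hA.1 hx)
    have hBP : B ⊆ P := fun x hx => hKP _ hBK (Finset.mem_union_left _ hx)
    have hsub : A ∪ B ⊆ P := Finset.union_subset hAP hBP
    exact ⟨hsub, fun hmem => hwP (hsub hmem)⟩
  have hFnotK' : F ∉ stellarSub K F w := by
    rintro (⟨_, hns⟩ | ⟨A, B, hA, hB, hEq⟩)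
    · exact hns Finset.Subset.rfl
    · have hwF : w ∈ F := hEq ▸ Finset.mem_insert_self w _
      exact hwP (hFsubP hwF)
  -- vertex count
  have hV : ∀ i : ℕ, i = 0 → {T | T ∈ stellarSub K F w ∧ T.card = 1} =
      insert {w} {T | T ∈ K ∧ T.card = 1} := by
    intro i _
    ext T
    simp only [Set.mem_insert_iff, Set.mem_setOf_eq]
    constructor
    · rintro ⟨hT | ⟨A, B, hA, hB, rfl⟩, hc⟩
      · exact Or.inr ⟨hT.1, hc⟩
      · left
        have hnw := (hABsub A B hA hB).2
        rw [Finset.card_insert_of_notMem hnw] at hc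
        have hAB : A ∪ B = ∅ := Finset.card_eq_zero.mp (by omega)
        rw [hAB]; rfl
    · rintro (rfl | ⟨hT, hc⟩)
      · exact ⟨hwK', rfl⟩
      · refine ⟨Or.inl ⟨hT, fun hsub => ?_⟩, hc⟩
        have := Finset.card_le_card hsub
        omega
  have hfinK1 : {T | T ∈ K ∧ T.card = 1}.Finite := by
    apply Set.Finite.subset P.powerset.finite_toSet
    rintro T ⟨hT, -⟩
    simp only [Finset.coe_powerset, Set.mem_preimage, Set.mem_powerset_iff]
    exact fun x hx => hKP T hT hx
  have hwnot1 : ({w} : Finset (EuclideanSpace ℝ (Fin d))) ∉ {T | T ∈ K ∧ T.card = 1} := by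
    rintro ⟨hT, -⟩; exact hwP (hKP _ hT (Finset.mem_singleton_self w))
  have hcount0 : fcount (stellarSub K F w) 0 = fcount K 0 + 1 := by
    show {T | T ∈ stellarSub K F w ∧ T.card = 0 + 1}.ncard = {T | T ∈ K ∧ T.card = 0 + 1}.ncard + 1
    simp only [Nat.zero_add]
    rw [hV 0 rfl, Set.ncard_insert_of_notMem hwnot1 hfinK1]
  -- edge count
  have hE : {T | T ∈ stellarSub K F w ∧ T.card = 2} =
      {T | T ∈ K ∧ T.card = 2} ∪
      ((fun x => ({w, x} : Finset (EuclideanSpace ℝ (Fin d)))) ''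
        ((F : Set (EuclideanSpace ℝ (Fin d))) ∪ {va, vb})) := by
    ext T
    simp only [Set.mem_union, Set.mem_setOf_eq, Set.mem_image]
    constructor
    · rintro ⟨hT | ⟨A, B, hA, hB, rfl⟩, hc⟩
      · exact Or.inl ⟨hT.1, hc⟩
      · right
        have hnw := (hABsub A B hA hB).2
        rw [Finset.card_insert_of_notMem hnw] at hc
        obtain ⟨x, hx⟩ : ∃ x, A ∪ B = {x} := Finset.card_eq_one.mp (by omega)
        refine ⟨x, ?_, by rw [hx]⟩
        by_cases hxF : x ∈ F
        · exact Or.inl hxF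
        · right
          have hAx : A = ∅ := by
            rw [Finset.eq_empty_iff_forall_notMem]
            intro y hy
            have hyx : y = x := by
              have : y ∈ A ∪ B := Finset.mem_union_left _ hy
              rw [hx] at this; exact Finset.mem_singleton.mp this
            exact hxF (hA.1 (hyx ▸ hy))
          have hBx : B = {x} := by rw [hAx, Finset.empty_union] at hx; exact hx
          have := (hlk x).mp (hBx ▸ hB)
          simpa using this
    · rintro (⟨hT, hc⟩ | ⟨x, hx, rfl⟩)
      · refine ⟨Or.inl ⟨hT, fun hsub => ?_⟩, hc⟩
        have := Finset.card_le_card hsub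
        omega
      · have hxP : x ∈ P := by
          rcases hx with hx | hx
          · exact hFsubP hx
          · rcases hx with rfl | hx
            · exact haP
            · rw [Set.mem_singleton_iff] at hx; subst hx; exact hbP
        have hxw : x ≠ w := fun h => hwP (h ▸ hxP)
        have hcard2 : ({w, x} : Finset (EuclideanSpace ℝ (Fin d))).card = 2 := by
          rw [Finset.card_insert_of_notMem (by simp [Ne.symm hxw]), Finset.card_singleton]
        refine ⟨Or.inr ?_, hcard2⟩
        rcases hx with hx | hx
        · refine ⟨{x}, ∅, ?_, ⟨by simp, by simpa using hF⟩, by simp⟩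
          exact Finset.ssubset_iff_subset_ne.mpr ⟨Finset.singleton_subset_iff.mpr hx,
            fun h => by rw [← h, Finset.card_singleton] at hcard; omega⟩
        · have hxab : x = va ∨ x = vb := by
            rcases hx with rfl | hx
            · exact Or.inl rfl
            · rw [Set.mem_singleton_iff] at hx; exact Or.inr hx
          refine ⟨∅, {x}, Finset.empty_ssubset.mpr hFne, (hlk x).mpr hxab, by simp⟩
  have hfinK2 : {T | T ∈ K ∧ T.card = 2}.Finite := by
    apply Set.Finite.subset P.powerset.finite_toSet
    rintro T ⟨hT, -⟩
    simp only [Finset.coe_powerset, Set.mem_preimage, Set.mem_powerset_iff]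
    exact fun x hx => hKP T hT hx
  have hfinFab : ((F : Set (EuclideanSpace ℝ (Fin d))) ∪ {va, vb}).Finite :=
    (F.finite_toSet).union ((Set.finite_singleton _).insert _)
  have hdisj2 : Disjoint {T | T ∈ K ∧ T.card = 2}
      ((fun x => ({w, x} : Finset (EuclideanSpace ℝ (Fin d)))) ''
        ((F : Set (EuclideanSpace ℝ (Fin d))) ∪ {va, vb})) := by
    rw [Set.disjoint_left]
    rintro T ⟨hT, -⟩ ⟨x, -, rfl⟩
    exact hwP (hKP _ hT (Finset.mem_insert_self w _))
  have hinj : Set.InjOn (fun x => ({w, x} : Finset (EuclideanSpace ℝ (Fin d))))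
      ((F : Set (EuclideanSpace ℝ (Fin d))) ∪ {va, vb}) := by
    intro x hx y hy hxy
    have hxP : x ∈ P := by
      rcases hx with hx | hx
      · exact hFsubP hx
      · rcases hx with rfl | hx
        · exact haP
        · rw [Set.mem_singleton_iff] at hx; subst hx; exact hbP
    have hxw : x ≠ w := fun h => hwP (h ▸ hxP)
    have hxy' : ({w, x} : Finset (EuclideanSpace ℝ (Fin d))) = {w, y} := hxy
    have : x ∈ ({w, y} : Finset (EuclideanSpace ℝ (Fin d))) := by
      rw [← hxy']; simp
    rcases Finset.mem_insert.mp this with h | h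
    · exact absurd h hxw
    · exact Finset.mem_singleton.mp h
  have hdisjFab : Disjoint (F : Set (EuclideanSpace ℝ (Fin d))) ({va, vb} : Set _) := by
    rw [Set.disjoint_right]
    rintro x (rfl | hx)
    · exact haF
    · rw [Set.mem_singleton_iff] at hx; subst hx; exact hbF
  have hcount1 : fcount (stellarSub K F w) 1 = fcount K 1 + (d + 1) := by
    show {T | T ∈ stellarSub K F w ∧ T.card = 1 + 1}.ncard =
      {T | T ∈ K ∧ T.card = 1 + 1}.ncard + (d + 1)
    norm_num
    rw [hE, Set.ncard_union_eq hdisj2 hfinK2 (hfinFab.image _),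
      Set.ncard_image_of_injOn hinj,
      Set.ncard_union_eq hdisjFab F.finite_toSet ((Set.finite_singleton _).insert _),
      Set.ncard_coe_finset, Set.ncard_pair hab]
    omega
  refine ⟨?_, hcount0, ?_, ?_⟩
  · -- g2
    unfold g2
    rw [hcount0, hcount1]
    push_cast
    ring
  · -- no missing face of cardinality d
    rintro ⟨G, ⟨hGv, hGnot, hGsub⟩, hGcard⟩
    by_cases hwG : w ∈ G
    · -- w ∈ G
      set T := G.erase w with hTdef
      have hTG : T ⊆ G := Finset.erase_subset _ _
      have hTP : T ⊆ P := by
        intro x hx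
        have hxG : x ∈ G := hTG hx
        have hxw : x ≠ w := Finset.ne_of_mem_erase hx
        have hx1 : ({x} : Finset (EuclideanSpace ℝ (Fin d))) ∈ stellarSub K F w := hGv x hxG
        rcases hx1 with ⟨hx1, -⟩ | ⟨A, B, hA, hB, hEq⟩
        · exact hKP _ hx1 (Finset.mem_singleton_self x)
        · exfalso
          have : w ∈ ({x} : Finset (EuclideanSpace ℝ (Fin d))) :=
            hEq ▸ Finset.mem_insert_self w _
          exact hxw (Finset.mem_singleton.mp this).symm
      have hwT : w ∉ T := Finset.notMem_erase _ _
      have hTcard : T.card = d - 1 := by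
        rw [hTdef, Finset.card_erase_of_mem hwG, hGcard]
      have hGT : G = insert w T := (Finset.insert_erase hwG).symm
      -- B and A
      set B := T \ F with hBdef
      set A := T ∩ F with hAdef
      have hTAB : T = A ∪ B := by
        rw [hAdef, hBdef]; ext x
        simp only [Finset.mem_union, Finset.mem_inter, Finset.mem_sdiff]
        tauto
      have hcardAB : A.card + B.card = T.card := Finset.card_inter_add_card_sdiff T F
      by_cases hB0 : B = ∅
      · -- T ⊆ F hence T = F
        have hTF : T ⊆ F := Finset.sdiff_eq_empty_iff_subset.mp hB0
        have hTeqF : T = F := Finset.eq_of_subset_of_card_le hTF (by omega)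
        have hFG : F ⊂ G := by
          rw [← hTeqF]
          exact Finset.ssubset_iff_subset_ne.mpr ⟨hTG, by
            intro h; rw [hTdef] at h
            have := Finset.card_erase_of_mem hwG
            rw [h] at this; omega⟩
        exact hFnotK' (hGsub F hFG)
      · have hBpos : 1 ≤ B.card := Finset.card_pos.mpr (Finset.nonempty_iff_ne_empty.mpr hB0)
        have hBsubT : B ⊆ T := Finset.sdiff_subset
        by_cases hBbig : B.card = d - 1
        · -- B = T, get two elements of B
          have hBT : B = T := Finset.eq_of_subset_of_card_le hBsubT (by omega)
          obtain ⟨x, hxB, y, hyB, hxy⟩ := Finset.one_lt_card.mp (by omega : 1 < B.card)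
          have hS : ({w, x, y} : Finset (EuclideanSpace ℝ (Fin d))) ⊂ G := by
            refine Finset.ssubset_iff_subset_ne.mpr ⟨?_, ?_⟩
            · intro z hz
              rcases Finset.mem_insert.mp hz with rfl | hz
              · exact hwG
              rcases Finset.mem_insert.mp hz with rfl | hz
              · exact hTG (hBsubT hxB)
              · rw [Finset.mem_singleton] at hz; subst hz; exact hTG (hBsubT hyB)
            · intro h
              have hcc : ({w, x, y} : Finset (EuclideanSpace ℝ (Fin d))).card ≤ 3 := by
                apply le_trans (Finset.card_insert_le _ _)
                have : ({x, y} : Finset (EuclideanSpace ℝ (Fin d))).card ≤ 2 := by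
                  apply le_trans (Finset.card_insert_le _ _); simp
                omega
              rw [h, hGcard] at hcc; omega
          have hSK := hGsub _ hS
          rcases hSK with ⟨hSK, -⟩ | ⟨A', B', hA', hB', hEq⟩
          · exact hwP (hKP _ hSK (Finset.mem_insert_self w _))
          · have hnwAB := (hABsub A' B' hA' hB').2
            have hxyAB : ({x, y} : Finset (EuclideanSpace ℝ (Fin d))) = A' ∪ B' := by
              have h1 : ({w, x, y} : Finset (EuclideanSpace ℝ (Fin d))).erase w =
                  (insert w (A' ∪ B')).erase w := by rw [← hEq]
              have hwxy : w ∉ ({x, y} : Finset (EuclideanSpace ℝ (Fin d))) := by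
                intro h
                rcases Finset.mem_insert.mp h with rfl | h
                · exact hwP (hTP (hBsubT hxB))
                · rw [Finset.mem_singleton] at h; subst h; exact hwP (hTP (hBsubT hyB))
              rwa [Finset.erase_insert hwxy, Finset.erase_insert hnwAB] at h1
            have hA'e : A' = ∅ := by
              rw [Finset.eq_empty_iff_forall_notMem]
              intro z hz
              have hzF : z ∈ F := hA'.1 hz
              have : z ∈ ({x, y} : Finset (EuclideanSpace ℝ (Fin d))) := by
                rw [hxyAB]; exact Finset.mem_union_left _ hz
              rcases Finset.mem_insert.mp this with rfl | h
              · exact (Finset.mem_sdiff.mp hxB).2 hzF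
              · rw [Finset.mem_singleton] at h; subst h
                exact (Finset.mem_sdiff.mp hyB).2 hzF
            have hB'xy : B' = ({x, y} : Finset (EuclideanSpace ℝ (Fin d))) := by
              rw [hxyAB, hA'e, Finset.empty_union]
            obtain ⟨hB'int, hB'K⟩ := hB'
            have hcardle := hKcard _ hB'K
            rw [hB'xy] at hcardle
            have hxF : x ∉ F := (Finset.mem_sdiff.mp hxB).2
            have hyF : y ∉ F := (Finset.mem_sdiff.mp hyB).2
            have hcardu : ({x, y} ∪ F : Finset (EuclideanSpace ℝ (Fin d))).card = 2 + F.card := by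
              rw [Finset.card_union_of_disjoint]
              · congr 1
                rw [Finset.card_insert_of_notMem (by simp [hxy]), Finset.card_singleton]
              · rw [Finset.disjoint_left]
                rintro z hz
                rcases Finset.mem_insert.mp hz with rfl | hz
                · exact hxF
                · rw [Finset.mem_singleton] at hz; subst hz; exact hyF
            rw [hcardu] at hcardle
            omega
        · -- 1 ≤ B.card ≤ d - 2
          have hS : insert w B ⊂ G := by
            refine Finset.ssubset_iff_subset_ne.mpr ⟨?_, ?_⟩
            · intro z hz
              rcases Finset.mem_insert.mp hz with rfl | hz
              · exact hwG
              · exact hTG (hBsubT hz)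
            · intro h
              have hwB : w ∉ B := fun h' => hwT (hBsubT h')
              have : (insert w B).card = B.card + 1 := Finset.card_insert_of_notMem hwB
              rw [h, hGcard] at this
              omega
          have hSK := hGsub _ hS
          rcases hSK with ⟨hSK, -⟩ | ⟨A', B', hA', hB', hEq⟩
          · exact hwP (hKP _ hSK (Finset.mem_insert_self w _))
          · have hnwAB := (hABsub A' B' hA' hB').2
            have hwB : w ∉ B := fun h' => hwT (hBsubT h')
            have hBAB : B = A' ∪ B' := by
              have h1 : (insert w B).erase w = (insert w (A' ∪ B')).erase w := by rw [← hEq]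
              rwa [Finset.erase_insert hwB, Finset.erase_insert hnwAB] at h1
            have hA'e : A' = ∅ := by
              rw [Finset.eq_empty_iff_forall_notMem]
              intro z hz
              have hzF : z ∈ F := hA'.1 hz
              have hzB : z ∈ B := by rw [hBAB]; exact Finset.mem_union_left _ hz
              exact (Finset.mem_sdiff.mp hzB).2 hzF
            have hB'B : B' = B := by rw [hBAB, hA'e, Finset.empty_union]
            have hBlink : B ∈ link K F := hB'B ▸ hB'
            have hAF : A ⊂ F := by
              refine Finset.ssubset_iff_subset_ne.mpr ⟨Finset.inter_subset_right, ?_⟩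
              intro h
              have : A.card = F.card := by rw [h]
              omega
            apply hGnot
            exact Or.inr ⟨A, B, hAF, hBlink, by rw [hGT, hTAB]⟩
    · -- w ∉ G : G would be a missing face of K
      have h1 : ∀ v ∈ G, ({v} : Finset (EuclideanSpace ℝ (Fin d))) ∈ K := by
        intro v hv
        rcases hGv v hv with ⟨h, -⟩ | ⟨A, B, hA, hB, hEq⟩
        · exact h
        · exfalso
          have : w ∈ ({v} : Finset (EuclideanSpace ℝ (Fin d))) :=
            hEq ▸ Finset.mem_insert_self w _
          rw [Finset.mem_singleton] at this
          exact hwG (this ▸ hv)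
      have hFG : ¬ F ⊆ G := by
        intro hFG
        have : F ⊂ G := Finset.ssubset_iff_subset_ne.mpr ⟨hFG, by
          intro h; rw [h, hGcard] at hcard; omega⟩
        exact hFnotK' (hGsub F this)
      have h3 : ∀ t ⊂ G, t ∈ K := by
        intro t ht
        rcases hGsub t ht with ⟨h, -⟩ | ⟨A, B, hA, hB, hEq⟩
        · exact h
        · exfalso
          have hwt : w ∈ t := hEq ▸ Finset.mem_insert_self w _
          exact hwG (ht.1 hwt)
      have h2 : G ∉ K := fun h => hGnot (Or.inl ⟨h, hFG⟩)
      exact hprime.1 ⟨G, ⟨h1, h2, h3⟩, hGcard⟩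
  · -- not a simplex boundary
    rintro ⟨S, hS⟩
    have hwS : ({w} : Finset (EuclideanSpace ℝ (Fin d))) ⊂ S := by
      have := hwK'
      rw [hS] at this
      exact this
    have hFS : F ⊆ S := by
      intro v hv
      have hvK' : ({v} : Finset (EuclideanSpace ℝ (Fin d))) ∈ stellarSub K F w := by
        refine Or.inl ⟨hPK v (hFsubP hv), fun hsub => ?_⟩
        have := Finset.card_le_card hsub
        simp at this
        omega
      rw [hS] at hvK'
      exact hvK'.1 (Finset.mem_singleton_self v)
    have hFSeq : F = S := by
      by_contra hne
      have : F ⊂ S := Finset.ssubset_iff_subset_ne.mpr ⟨hFS, hne⟩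
      have : F ∈ simplexBdry S := this
      rw [← hS] at this
      exact hFnotK' this
    have hwF : w ∈ F := by
      rw [hFSeq]
      exact hwS.1 (Finset.mem_singleton_self w)
    exact hwP (hFsubP hwF)
end
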